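/- arXiv:1110.5619 — 7 statements merged into one kernel-verified Lean document; each statement's English description precedes it below -/
import Mathlib

section
/- Let V be a real vector space and K₁, K₂ ⊆ V nonempty disjoint convex sets. Then there exist a real closed extension field R of ℝ, an ℝ-linear functional φ : V → R, and an element γ ∈ R with γ > 0, such that φ(x) + γ ≤ φ(y) for all x ∈ K₁ and all y ∈ K₂. -/
/-- A linearly ordered field is *real closed* if every nonnegative element is a square and
every polynomial of odd degree has a root. -/
def IsRealClosed' (R : Type*) [Field R] [LinearOrder R] [IsStrictOrderedRing R] : Prop :=
  (∀ x : R, 0 ≤ x → ∃ y : R, y ^ 2 = x) ∧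
    ∀ p : Polynomial R, Odd p.natDegree → ∃ x : R, p.IsRoot x

universe u

section MyAux
open Filter Polynomial Pointwise
universe v


section OddRoot
lemma myaux_odd_root_pos (p : ℝ[X]) (hlc : 0 < p.leadingCoeff) (h : Odd p.natDegree) :
    ∃ x : ℝ, p.IsRoot x := by
  have hdeg : 0 < p.natDegree := h.pos
  have hdeg' : 0 < p.degree := natDegree_pos_iff_degree_pos.mp hdeg
  have htop : Tendsto (fun x => eval x p) atTop atTop :=
    p.tendsto_atTop_of_leadingCoeff_nonneg hdeg' hlc.le
  set q : ℝ[X] := p.comp (-X) with hq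
  have hqdeg : q.natDegree = p.natDegree := by
    rw [hq, natDegree_comp]; simp
  have hqlc : q.leadingCoeff = -p.leadingCoeff := by
    rw [hq, leadingCoeff_comp (by simp)]
    simp [h.neg_one_pow]
  have hbot : Tendsto (fun x => eval x q) atTop atBot :=
    q.tendsto_atBot_of_leadingCoeff_nonpos
      (natDegree_pos_iff_degree_pos.mp (hqdeg ▸ hdeg)) (by simp [hqlc, hlc.le])
  obtain ⟨b, hb⟩ := (htop.eventually (eventually_ge_atTop (1:ℝ))).exists
  obtain ⟨a, ha⟩ := (hbot.eventually (eventually_le_atBot (-1:ℝ))).exists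
  have ha' : eval (-a) p ≤ -1 := by rwa [hq, eval_comp, eval_neg, eval_X] at ha
  have hc : Continuous fun x => eval x p := p.continuous
  have h0 : (0:ℝ) ∈ Set.uIcc (eval (-a) p) (eval b p) :=
    Set.mem_uIcc.mpr (Or.inl ⟨by linarith, by linarith⟩)
  obtain ⟨x, _, hx⟩ := intermediate_value_uIcc (a := -a) (b := b) hc.continuousOn h0
  exact ⟨x, hx⟩

lemma myaux_odd_root (p : ℝ[X]) (h : Odd p.natDegree) : ∃ x : ℝ, p.IsRoot x := by
  rcases lt_trichotomy p.leadingCoeff 0 with hlc | hlc | hlc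
  · obtain ⟨x, hx⟩ := myaux_odd_root_pos (-p) (by simpa using hlc) (by simpa using h)
    exact ⟨x, by simpa using hx⟩
  · exfalso; have := leadingCoeff_eq_zero.mp hlc; simp [this] at h
  · exact myaux_odd_root_pos p hlc h
end OddRoot

section Sep

lemma myaux_sep_fin {V : Type u} [AddCommGroup V] [Module ℝ V] (n : ℕ) (z : Fin n → V)
    (h : (0:V) ∉ convexHull ℝ (Set.range z)) :
    ∃ L : V →ₗ[ℝ] ℝ, ∀ i, 1 ≤ L (z i) := by
  classical
  set T : (Fin n → ℝ) →ₗ[ℝ] V :=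
    (LinearMap.lsum ℝ (fun _ : Fin n => ℝ) ℝ) (fun i => LinearMap.toSpanSingleton ℝ V (z i))
    with hT
  have hTapp : ∀ w : Fin n → ℝ, T w = ∑ i, w i • z i := by
    intro w
    simp [hT, LinearMap.lsum_apply, LinearMap.toSpanSingleton_apply]
  have hdisj : Disjoint (stdSimplex ℝ (Fin n))
      ((LinearMap.ker T : Submodule ℝ (Fin n → ℝ)) : Set (Fin n → ℝ)) := by
    rw [Set.disjoint_left]
    rintro w ⟨hw0, hw1⟩ hker
    apply h
    have : (0:V) = Finset.univ.centerMass w z := by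
      rw [Finset.centerMass_eq_of_sum_1 _ _ hw1]
      have := LinearMap.mem_ker.mp hker
      rw [hTapp] at this
      simp [this.symm]
    rw [this]
    exact Finset.centerMass_mem_convexHull _ (fun i _ => hw0 i) (by simp [hw1])
      (fun i _ => Set.mem_range_self i)
  obtain ⟨f, u, v, hfu, huv, hvf⟩ :=
    geometric_hahn_banach_compact_closed (convex_stdSimplex ℝ (Fin n))
      (isCompact_stdSimplex ℝ (Fin n)) (LinearMap.ker T).convex
      (Submodule.closed_of_finiteDimensional _) hdisj
  have hker0 : ∀ b ∈ LinearMap.ker T, f b = 0 := by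
    intro b hb
    by_contra hfb
    have key : ∀ c : ℝ, v < c * f b := by
      intro c
      have : (c • b) ∈ LinearMap.ker T := Submodule.smul_mem _ c hb
      simpa using hvf _ this
    have := key ((v - 1) / f b)
    rw [div_mul_cancel₀ _ hfb] at this; linarith
  have hv0 : v < 0 := by simpa using hvf 0 (Submodule.zero_mem _)
  have hneg : ∀ a ∈ stdSimplex ℝ (Fin n), f a < v := fun a ha => (hfu a ha).trans huv
  have hle : LinearMap.ker T ≤ LinearMap.ker (f.toLinearMap) := fun b hb =>
    LinearMap.mem_ker.mpr (hker0 b hb)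
  let g : ((Fin n → ℝ) ⧸ LinearMap.ker T) →ₗ[ℝ] ℝ := (LinearMap.ker T).liftQ f.toLinearMap hle
  let e := LinearMap.quotKerEquivRange T
  let L₀ : LinearMap.range T →ₗ[ℝ] ℝ := g ∘ₗ (e.symm : LinearMap.range T →ₗ[ℝ] _)
  obtain ⟨L₁, hL₁⟩ := LinearMap.exists_extend L₀
  refine ⟨(-v)⁻¹ • (-L₁), fun i => ?_⟩
  have hzi : T (Pi.single i 1) = z i := by
    rw [hTapp]; simp [Pi.single_apply]
  have hmem : z i ∈ LinearMap.range T := ⟨Pi.single i 1, hzi⟩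
  have hL₁z : L₁ (z i) = f (Pi.single i 1) := by
    have h1 : L₁ (z i) = L₀ ⟨z i, hmem⟩ := by
      have := congrArg (fun m => m ⟨z i, hmem⟩) hL₁
      simpa using this
    rw [h1]
    show g (e.symm ⟨z i, hmem⟩) = f (Pi.single i 1)
    have he : e (Submodule.Quotient.mk (Pi.single i 1)) = ⟨z i, hmem⟩ := by
      apply Subtype.ext
      simp [e, LinearMap.quotKerEquivRange, hzi]
    rw [← he, LinearEquiv.symm_apply_apply]
    simp [g, Submodule.liftQ_apply]
  have hsingle : f (Pi.single i 1) < v := hneg _ (single_mem_stdSimplex ℝ i)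
  have hv : 0 < -v := by linarith
  simp only [LinearMap.smul_apply, LinearMap.neg_apply, smul_eq_mul, hL₁z]
  rw [← div_eq_inv_mul, le_div_iff₀ hv]
  linarith

lemma myaux_sep_finset {V : Type u} [AddCommGroup V] [Module ℝ V] (S : Finset V)
    (h : (0:V) ∉ convexHull ℝ (S : Set V)) :
    ∃ L : V →ₗ[ℝ] ℝ, ∀ z ∈ S, 1 ≤ L z := by
  classical
  have hrange : Set.range (fun i : Fin S.card => ((S.equivFin.symm i : S) : V)) = (S : Set V) := by
    ext w
    simp only [Set.mem_range, Finset.mem_coe]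
    constructor
    · rintro ⟨i, rfl⟩; exact (S.equivFin.symm i).2
    · intro hw; exact ⟨S.equivFin ⟨w, hw⟩, by simp⟩
  obtain ⟨L, hL⟩ := myaux_sep_fin S.card (fun i => ((S.equivFin.symm i : S) : V))
    (by rw [hrange]; exact h)
  refine ⟨L, fun z hz => ?_⟩
  have := hL (S.equivFin ⟨z, hz⟩)
  simpa using this
end Sep



lemma myaux_germ_exists_rep {α : Type u} {β : Type v} {l : Filter α} (x : Germ l β) :
    ∃ f : α → β, x = ↑f :=
  Germ.inductionOn x fun f => ⟨f, rfl⟩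


lemma myaux_realClosed {α : Type u} (U : Ultrafilter α) :
    IsRealClosed' (Germ (U : Filter α) ℝ) := by
  constructor
  · intro x hx
    obtain ⟨f, rfl⟩ := myaux_germ_exists_rep x
    rw [← Germ.coe_zero, Germ.coe_le] at hx
    refine ⟨((fun a => Real.sqrt (f a)) : α → ℝ), ?_⟩
    rw [← Germ.coe_pow, Germ.coe_eq]
    filter_upwards [hx] with a ha
    simpa using Real.sq_sqrt ha
  · intro p hp
    classical
    have hp0 : p ≠ 0 := by
      rintro rfl
      rw [natDegree_zero] at hp
      exact (Nat.not_odd_iff_even.mpr Even.zero) hp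
    set n := p.natDegree with hn
    set c : ℕ → α → ℝ := fun i => (p.coeff i).out with hcdef
    have hc : ∀ i, ((c i : α → ℝ) : Germ (U : Filter α) ℝ) = p.coeff i := by
      intro i
      conv_rhs => rw [← (p.coeff i).out_eq]
      exact congrFun Quotient.mk''_eq_mk _
    set q : α → ℝ[X] := fun a => ∑ i ∈ Finset.range (n+1), Polynomial.monomial i (c i a)
      with hqdef
    have hqcoeff : ∀ a k, (q a).coeff k = if k < n+1 then c k a else 0 := by
      intro a k
      rw [hqdef, finset_sum_coeff]
      simp [coeff_monomial, Finset.sum_ite_eq', Finset.mem_range]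
    have hqdegle : ∀ a, (q a).natDegree ≤ n := by
      intro a
      refine natDegree_le_iff_coeff_eq_zero.mpr fun N hN => ?_
      rw [hqcoeff]
      simp [Nat.not_lt.mpr hN]
    have hcn : ((c n : α → ℝ) : Germ (U : Filter α) ℝ) ≠ 0 := by
      rw [hc]
      have : p.coeff n ≠ 0 := by
        rw [hn, coeff_natDegree]
        exact leadingCoeff_ne_zero.mpr hp0
      exact this
    have hB : ∀ᶠ a in (U : Filter α), c n a ≠ 0 := by
      rw [Ultrafilter.eventually_not]
      intro hev
      exact hcn (by rw [← Germ.coe_zero]; exact Germ.coe_eq.mpr (hev.mono fun a ha => ha))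
    have hdeg : ∀ a, c n a ≠ 0 → (q a).natDegree = n := by
      intro a ha
      refine le_antisymm (hqdegle a) (le_natDegree_of_ne_zero ?_)
      rw [hqcoeff]
      simpa using ha
    have hrex : ∃ r : α → ℝ, ∀ a, c n a ≠ 0 → (q a).eval (r a) = 0 := by
      refine ⟨fun a => if h : ∃ t, (q a).IsRoot t then h.choose else 0, fun a ha => ?_⟩
      have hex : ∃ t, (q a).IsRoot t := myaux_odd_root _ (by rw [hdeg a ha]; exact hp)
      beta_reduce
      rw [dif_pos hex]
      exact hex.choose_spec
    obtain ⟨r, hr⟩ := hrex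
    refine ⟨((r : α → ℝ) : Germ (U : Filter α) ℝ), ?_⟩
    show p.eval _ = 0
    have hqeval : ∀ a, (q a).eval (r a) = ∑ i ∈ Finset.range (n+1), c i a * r a ^ i := by
      intro a
      rw [hqdef, eval_finset_sum]
      simp [eval_monomial]
    have hev : p.eval ((r : α → ℝ) : Germ (U : Filter α) ℝ)
        = ↑(fun a => (q a).eval (r a)) := by
      rw [eval_eq_sum_range, ← hn]
      have h1 : ∀ i, (p.coeff i) * ((r : α → ℝ) : Germ (U : Filter α) ℝ)^i
          = (((c i) * (r ^ i) : α → ℝ) : Germ (U : Filter α) ℝ) := by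
        intro i
        rw [← hc i, ← Germ.coe_pow, ← Germ.coe_mul]
      rw [Finset.sum_congr rfl (fun i _ => h1 i)]
      have h3 : (∑ i ∈ Finset.range (n+1), (((c i) * (r ^ i) : α → ℝ) : Germ (U : Filter α) ℝ))
          = (((∑ i ∈ Finset.range (n+1), ((c i) * (r ^ i)) : α → ℝ)) : Germ (U : Filter α) ℝ) :=
        (map_sum (Germ.coeRingHom (U : Filter α)) _ _).symm
      rw [h3]
      have h2 : (∑ i ∈ Finset.range (n+1), ((c i) * (r ^ i) : α → ℝ))
          = fun a => (q a).eval (r a) := by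
        funext a
        rw [hqeval a, Finset.sum_apply]
        simp [Pi.mul_apply, Pi.pow_apply]
      rw [h2]
    rw [hev, ← Germ.coe_zero, Germ.coe_eq]
    filter_upwards [hB] with a ha
    exact hr a ha

end MyAux

open Filter Polynomial Pointwise in
/-- **Separation of two disjoint convex sets over a real closed extension field.**
For nonempty disjoint convex sets `K₁, K₂` in a real vector space `V` there are a real
closed extension field `R` of `ℝ`, an `ℝ`-linear functional `φ : V → R` and `γ ∈ R`,
`γ > 0`, with `φ x + γ ≤ φ y` for all `x ∈ K₁`, `y ∈ K₂`. -/
theorem real_closed_separation_of_convex_sets {V : Type u} [AddCommGroup V] [Module ℝ V]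
    (K₁ K₂ : Set V) (h₁ : K₁.Nonempty) (h₂ : K₂.Nonempty)
    (hdisj : K₁ ∩ K₂ = ∅) (hconv₁ : Convex ℝ K₁) (hconv₂ : Convex ℝ K₂) :
    ∃ (R : Type u) (_ : Field R) (_ : LinearOrder R) (_ : IsStrictOrderedRing R) (f : ℝ →+*o R) (φ : V → R) (γ : R),
      IsRealClosed' R ∧
      (∀ v w : V, φ (v + w) = φ v + φ w) ∧
      (∀ (r : ℝ) (v : V), φ (r • v) = f r * φ v) ∧
      0 < γ ∧
      (∀ x ∈ K₁, ∀ y ∈ K₂, φ x + γ ≤ φ y) := by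
  classical
  have hD0 : (0:V) ∉ (K₂ - K₁ : Set V) := by
    intro h0
    rw [Set.mem_sub] at h0
    obtain ⟨y, hy, x, hx, hxy⟩ := h0
    rw [sub_eq_zero] at hxy
    subst hxy
    have : y ∈ K₁ ∩ K₂ := ⟨hx, hy⟩
    rw [hdisj] at this
    exact this
  have hDconv : Convex ℝ (K₂ - K₁ : Set V) := hconv₂.sub hconv₁
  have hLex : ∀ F : Finset V, ∃ L : V →ₗ[ℝ] ℝ,
      ∀ z ∈ F.filter (· ∈ (K₂ - K₁ : Set V)), 1 ≤ L z := by
    intro F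
    apply myaux_sep_finset
    intro h0
    apply hD0
    refine convexHull_min ?_ hDconv h0
    intro z hz
    simp only [Finset.coe_filter, Set.mem_setOf_eq] at hz
    exact hz.2
  choose L hL using hLex
  haveI : Nonempty (Finset V) := ⟨∅⟩
  let U : Ultrafilter (Finset V) := Ultrafilter.of atTop
  have hUatTop : (U : Filter (Finset V)) ≤ atTop := Ultrafilter.of_le _
  refine ⟨Germ (U : Filter (Finset V)) ℝ, inferInstance, inferInstance, inferInstance,
    ⟨(Germ.coeRingHom _).comp (Pi.constRingHom (Finset V) ℝ),
      fun a b hab => Germ.const_le hab⟩,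
    fun v => (((fun F => L F v) : Finset V → ℝ) : Germ (U : Filter (Finset V)) ℝ), 1,
    myaux_realClosed U, ?_, ?_, one_pos, ?_⟩
  · intro v w
    rw [← Germ.coe_add]
    exact congrArg Germ.ofFun (funext fun F => (L F).map_add v w)
  · intro r v
    show _ = (((fun _ => r) : Finset V → ℝ) : Germ (U : Filter (Finset V)) ℝ) * _
    rw [← Germ.coe_mul]
    refine congrArg Germ.ofFun (funext fun F => ?_)
    show L F (r • v) = r * L F v
    rw [map_smul, smul_eq_mul]
  · intro x hx y hy
    have hz : y - x ∈ (K₂ - K₁ : Set V) := Set.sub_mem_sub hy hx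
    have hA : {F : Finset V | y - x ∈ F} ∈ (U : Filter (Finset V)) := by
      apply hUatTop
      exact mem_atTop_sets.mpr ⟨{y - x}, fun F hF => Finset.singleton_subset_iff.mp hF⟩
    rw [show (1 : Germ (U : Filter (Finset V)) ℝ)
        = (((1 : Finset V → ℝ)) : Germ (U : Filter (Finset V)) ℝ) from (Germ.coe_one).symm,
      ← Germ.coe_add, Germ.coe_le]
    filter_upwards [hA] with F hF
    have hmem : y - x ∈ F.filter (· ∈ (K₂ - K₁ : Set V)) := Finset.mem_filter.mpr ⟨hF, hz⟩
    have h1 := hL F _ hmem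
    have h2 : 1 ≤ L F y - L F x := by simpa [map_sub] using h1
    show L F x + (1:ℝ) ≤ L F y
    linarith
end

section
/- Let V be a real vector space, C ⊆ V a convex cone, and H ⊆ V a linear subspace with (C + H) ∩ (−(C + H)) = H. Let R be a real closed extension field of ℝ and φ : H → R an ℝ-linear functional with φ(y) ≥ 0 for all y ∈ C ∩ H. Then there exist a real closed extension field R' of R (with ordered-field embeddings ℝ → R → R') and an ℝ-linear functional φ̄ : V → R' such that φ̄(h) equals the image of φ(h) in R' for all h ∈ H, φ̄(y) ≥ 0 for all y ∈ C, and moreover φ̄(y) > 0 for all y ∈ C \ H. -/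
open scoped Pointwise

universe u v

open Filter
section Ultra

variable {α : Type*} {R : Type*} [Field R] [LinearOrder R] [IsStrictOrderedRing R] {U : Ultrafilter α}

lemma germ_coe_sum {β : Type*} (s : Finset β) (F : β → α → R) :
    ((fun i => ∑ k ∈ s, F k i : α → R) : Germ (U : Filter α) R)
      = ∑ k ∈ s, ((F k : α → R) : Germ (U : Filter α) R) := by
  classical
  induction s using Finset.induction_on with
  | empty => simp; rfl
  | insert a s hnot ih =>
      rw [Finset.sum_insert hnot, ← ih, ← Germ.coe_add]
      congr 1
      funext i
      simp [Finset.sum_insert hnot]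

lemma isRealClosed_germ (hR : IsRealClosed' R) :
    IsRealClosed' (Germ (U : Filter α) R) := by
  constructor
  · intro x
    refine x.inductionOn fun u hu => ?_
    have hev : ∀ᶠ i in (U : Filter α), 0 ≤ u i := by
      have := Germ.coe_le.mp (by rw [Germ.coe_zero] ; exact hu :
        ((0 : α → R) : Germ (U : Filter α) R) ≤ (u : Germ (U : Filter α) R))
      exact this
    refine ⟨((fun i => if h : 0 ≤ u i then (hR.1 (u i) h).choose else 0 : α → R) :
        Germ (U : Filter α) R), ?_⟩
    rw [← Germ.coe_pow]
    exact Germ.coe_eq.mpr <| hev.mono fun i hi => by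
      simp only [Pi.pow_apply, dif_pos hi]
      exact (hR.1 (u i) hi).choose_spec
  · intro p hodd
    have hp0 : p ≠ 0 := by rintro rfl; simp at hodd
    set n := p.natDegree with hn
    let a : ℕ → α → R := fun k => (p.coeff k).out
    have ha : ∀ k, ((a k : α → R) : Germ (U : Filter α) R) = p.coeff k := fun k =>
      (p.coeff k).out_eq
    let Q : α → Polynomial R := fun i =>
      ∑ k ∈ Finset.range (n + 1), Polynomial.C (a k i) * Polynomial.X ^ k
    have hQcoeff : ∀ i m, (Q i).coeff m = if m ≤ n then a m i else 0 := by
      intro i m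
      simp only [Q, Polynomial.finset_sum_coeff, Polynomial.coeff_C_mul,
        Polynomial.coeff_X_pow, mul_ite, mul_one, mul_zero]
      rw [Finset.sum_ite_eq (Finset.range (n+1)) m (fun k => a k i)]
      simp [Nat.lt_succ_iff]
    have hE : ∀ᶠ i in (U : Filter α), a n i ≠ 0 := by
      have hlc : p.coeff n ≠ 0 := by
        rw [hn]; exact Polynomial.leadingCoeff_ne_zero.mpr hp0
      rw [← ha n] at hlc
      have h2 : ¬ ∀ᶠ i in (U : Filter α), a n i = 0 := by
        intro h
        exact hlc (by rw [← Germ.coe_zero]; exact Germ.coe_eq.mpr (h.mono fun i hi => hi))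
      exact Ultrafilter.eventually_not.mpr h2
    have hdeg : ∀ i, a n i ≠ 0 → (Q i).natDegree = n := by
      intro i hi
      apply le_antisymm
      · apply Polynomial.natDegree_le_iff_coeff_eq_zero.mpr
        intro m hm
        rw [hQcoeff i m, if_neg (by omega)]
      · exact Polynomial.le_natDegree_of_ne_zero (by rw [hQcoeff i n, if_pos le_rfl]; exact hi)
    let x : α → R := fun i => if h : Odd (Q i).natDegree then (hR.2 (Q i) h).choose else 0
    have hxroot : ∀ i, a n i ≠ 0 → (Q i).eval (x i) = 0 := by
      intro i hi
      have hQodd : Odd (Q i).natDegree := by rw [hdeg i hi]; exact hodd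
      simp only [x, dif_pos hQodd]
      exact (hR.2 (Q i) hQodd).choose_spec
    refine ⟨((x : α → R) : Germ (U : Filter α) R), ?_⟩
    show Polynomial.eval _ p = 0
    rw [Polynomial.eval_eq_sum_range, ← hn]
    have hterm : ∀ k, p.coeff k * ((x : α → R) : Germ (U : Filter α) R) ^ k
        = ((fun i => a k i * x i ^ k : α → R) : Germ (U : Filter α) R) := by
      intro k
      rw [← ha k, ← Germ.coe_pow, ← Germ.coe_mul]
      rfl
    rw [Finset.sum_congr rfl (fun k _ => hterm k), ← germ_coe_sum, ← Germ.coe_zero]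
    refine Germ.coe_eq.mpr <| hE.mono fun i hi => ?_
    have := Polynomial.eval_eq_sum_range (p := Q i) (x i)
    rw [hdeg i hi] at this
    have hsum : ∑ k ∈ Finset.range (n + 1), a k i * x i ^ k
        = ∑ k ∈ Finset.range (n + 1), (Q i).coeff k * x i ^ k := by
      refine Finset.sum_congr rfl fun k hk => ?_
      rw [hQcoeff i k, if_pos (Nat.lt_succ_iff.mp (Finset.mem_range.mp hk))]
    show ∑ k ∈ Finset.range (n + 1), a k i * x i ^ k = (0 : α → R) i
    rw [hsum, ← this, hxroot i hi]
    rfl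


end Ultra

lemma exists_pos_functional {Q' : Type*} [AddCommGroup Q'] [Module ℝ Q']
    (G : Finset Q') (hG : (0 : Q') ∉ convexHull ℝ (G : Set Q')) :
    ∃ L : Q' →ₗ[ℝ] ℝ, ∀ x ∈ G, 0 < L x := by
  classical
  set E := Submodule.span ℝ (G : Set Q') with hE
  haveI : FiniteDimensional ℝ E := FiniteDimensional.span_of_finite ℝ G.finite_toSet
  set n := Module.finrank ℝ E with hn
  let e : E ≃ₗ[ℝ] (Fin n → ℝ) := (Module.finBasis ℝ E).equivFun
  let lift : ∀ x ∈ G, E := fun x hx => ⟨x, Submodule.subset_span hx⟩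
  let G' : Finset (Fin n → ℝ) :=
    G.attach.image fun y => e ⟨y.1, Submodule.subset_span y.2⟩
  let M : (Fin n → ℝ) →ₗ[ℝ] Q' := E.subtype ∘ₗ (e.symm : (Fin n → ℝ) →ₗ[ℝ] E)
  have hMG : M '' (G' : Set (Fin n → ℝ)) ⊆ (G : Set Q') := by
    rintro - ⟨z, hz, rfl⟩
    simp only [G', Finset.coe_image, Set.mem_image] at hz
    obtain ⟨y, -, rfl⟩ := hz
    simp only [M, LinearMap.comp_apply, LinearEquiv.coe_coe, LinearEquiv.symm_apply_apply]
    exact y.2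
  have h0' : (0 : Fin n → ℝ) ∉ convexHull ℝ (G' : Set (Fin n → ℝ)) := by
    intro h0
    apply hG
    have : M 0 ∈ M '' convexHull ℝ (G' : Set (Fin n → ℝ)) := ⟨0, h0, rfl⟩
    rw [M.image_convexHull, map_zero] at this
    exact convexHull_mono hMG this
  obtain ⟨F, u, hFu, hsep⟩ := geometric_hahn_banach_point_closed
    (convex_convexHull ℝ _) ((G'.finite_toSet.isCompact_convexHull ℝ).isClosed) h0'
  rw [map_zero] at hFu
  obtain ⟨E', hcompl⟩ := Submodule.exists_isCompl E
  let proj : Q' →ₗ[ℝ] E := E.projectionOnto E' hcompl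
  refine ⟨F.toLinearMap ∘ₗ (e : E →ₗ[ℝ] (Fin n → ℝ)) ∘ₗ proj, fun x hx => ?_⟩
  have hproj : proj x = ⟨x, Submodule.subset_span hx⟩ := by
    have := Submodule.projectionOnto_apply_left hcompl ⟨x, Submodule.subset_span hx⟩
    simpa using this
  have hmem : e ⟨x, Submodule.subset_span hx⟩ ∈ G' := by
    simp only [G', Finset.mem_image]
    exact ⟨⟨x, hx⟩, G.mem_attach _, rfl⟩
  have := hsep _ (subset_convexHull ℝ (G' : Set (Fin n → ℝ)) hmem)
  simp only [LinearMap.comp_apply, hproj]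
  calc (0:ℝ) < u := hFu
    _ < F (e ⟨x, Submodule.subset_span hx⟩) := this

open scoped Pointwise

section Main

variable {V : Type*} [AddCommGroup V] [Module ℝ V] {C : Set V} {H : Submodule ℝ V}

lemma cone_add_mem (hCconv : Convex ℝ C)
    (hCcone : ∀ y ∈ C, ∀ r : ℝ, 0 < r → r • y ∈ C)
    {a b : V} (ha : a ∈ C) (hb : b ∈ C) : a + b ∈ C := by
  have hhalf : (1/2 : ℝ) • a + (1/2 : ℝ) • b ∈ C :=
    hCconv ha hb (by norm_num) (by norm_num) (by norm_num)
  have h2 := hCcone _ hhalf 2 (by norm_num)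
  rw [smul_add, smul_smul, smul_smul] at h2
  norm_num at h2
  exact h2

lemma cone_sum_mem (hCconv : Convex ℝ C)
    (hCcone : ∀ y ∈ C, ∀ r : ℝ, 0 < r → r • y ∈ C)
    {ι₀ : Type*} (F : Finset ι₀) (hF : F.Nonempty) (t : ι₀ → ℝ) (y : ι₀ → V)
    (ht : ∀ j ∈ F, 0 < t j) (hy : ∀ j ∈ F, y j ∈ C) :
    (∑ j ∈ F, t j • y j) ∈ C := by
  classical
  revert ht hy
  induction hF using Finset.Nonempty.cons_induction with
  | singleton a =>
      intro ht hy
      simpa using hCcone _ (hy a (by simp)) _ (ht a (by simp))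
  | cons a s ha hs ih =>
      intro ht hy
      rw [Finset.sum_cons]
      exact cone_add_mem hCconv hCcone
        (hCcone _ (hy a (by simp)) _ (ht a (by simp)))
        (ih (fun j hj => ht j (by simp [hj])) (fun j hj => hy j (by simp [hj])))

lemma no_vanishing_combo (hCconv : Convex ℝ C)
    (hCcone : ∀ y ∈ C, ∀ r : ℝ, 0 < r → r • y ∈ C)
    (hCH : (C + (H : Set V)) ∩ (-(C + (H : Set V))) = (H : Set V))
    {ι₀ : Type*} (F : Finset ι₀) (hF : F.Nonempty) (t : ι₀ → ℝ) (y : ι₀ → V)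
    (ht : ∀ j ∈ F, 0 < t j) (hyC : ∀ j ∈ F, y j ∈ C) (hyH : ∀ j ∈ F, y j ∉ H)
    (hsum : (∑ j ∈ F, t j • y j) ∈ H) : False := by
  classical
  obtain ⟨k, hk⟩ := hF
  have htk : (0:ℝ) < t k := ht k hk
  have hsplit : t k • y k + ∑ j ∈ F.erase k, t j • y j = ∑ j ∈ F, t j • y j :=
    Finset.add_sum_erase F (fun j => t j • y j) hk
  rcases (F.erase k).eq_empty_or_nonempty with he | hne
  · rw [he, Finset.sum_empty, add_zero] at hsplit
    have : y k = (t k)⁻¹ • (∑ j ∈ F, t j • y j) := by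
      rw [← hsplit, smul_smul, inv_mul_cancel₀ (ne_of_gt htk), one_smul]
    exact hyH k hk (this ▸ H.smul_mem _ hsum)
  · have hsC : (∑ j ∈ F.erase k, t j • y j) ∈ C :=
      cone_sum_mem hCconv hCcone _ hne t y
        (fun j hj => ht j (Finset.mem_of_mem_erase hj))
        (fun j hj => hyC j (Finset.mem_of_mem_erase hj))
    set c := ∑ j ∈ F, t j • y j with hc
    set s := ∑ j ∈ F.erase k, t j • y j with hs
    have h1 : y k ∈ C + (H : Set V) :=
      Set.mem_add.mpr ⟨y k, hyC k hk, 0, H.zero_mem, add_zero _⟩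
    have hty : t k • y k = c - s := by rw [← hsplit]; abel
    have hneg : -(y k) = (t k)⁻¹ • (s + -c) := by
      have : s + -c = -(t k • y k) := by rw [hty]; abel
      rw [this, smul_neg, smul_smul, inv_mul_cancel₀ (ne_of_gt htk), one_smul]
    have h2 : -(y k) ∈ C + (H : Set V) := by
      rw [hneg]
      refine Set.mem_add.mpr ⟨(t k)⁻¹ • s, hCcone _ hsC _ (by positivity),
        (t k)⁻¹ • (-c), H.smul_mem _ (H.neg_mem hsum), ?_⟩
      rw [← smul_add]
    have h3 : y k ∈ (H : Set V) := by
      rw [← hCH]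
      exact ⟨h1, Set.mem_neg.mpr h2⟩
    exact hyH k hk h3

end Main

lemma finite_step {V : Type u} [AddCommGroup V] [Module ℝ V]
    (C : Set V) (hCconv : Convex ℝ C)
    (hCcone : ∀ y ∈ C, ∀ r : ℝ, 0 < r → r • y ∈ C)
    (H : Submodule ℝ V)
    (hCH : (C + (H : Set V)) ∩ (-(C + (H : Set V))) = (H : Set V))
    (R : Type v) [Field R] [LinearOrder R] [IsStrictOrderedRing R] (f : ℝ →+*o R)
    (φ : H → R)
    (hadd : ∀ a b : H, φ (a + b) = φ a + φ b)
    (hsmul : ∀ (r : ℝ) (a : H), φ (r • a) = f r * φ a)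
    (hpos : ∀ a : H, (a : V) ∈ C → 0 ≤ φ a) (S : Finset V) :
    ∃ ψ : V → R,
      (∀ v w : V, ψ (v + w) = ψ v + ψ w) ∧
      (∀ (r : ℝ) (v : V), ψ (r • v) = f r * ψ v) ∧
      (∀ h : H, ψ (h : V) = φ h) ∧
      (∀ y, y ∈ C → y ∈ H → 0 ≤ ψ y) ∧
      (∀ y ∈ S, y ∈ C → y ∉ H → 0 < ψ y) := by
  classical
  obtain ⟨H', hcompl⟩ := Submodule.exists_isCompl H
  let πH : V →ₗ[ℝ] H := H.projectionOnto H' hcompl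
  set T : Finset V := S.filter (fun y2 => y2 ∈ C ∧ y2 ∉ H) with hT
  set G : Finset (V ⧸ H) := T.image H.mkQ with hGdef
  have hYex : ∀ x ∈ G, ∃ y2, y2 ∈ T ∧ H.mkQ y2 = x := by
    intro x hx
    obtain ⟨y2, hy2, hval⟩ := Finset.mem_image.mp hx
    exact ⟨y2, hy2, hval⟩
  let Y : V ⧸ H → V := fun x => if h : ∃ y2, y2 ∈ T ∧ H.mkQ y2 = x then h.choose else 0
  have hY : ∀ x ∈ G, Y x ∈ T ∧ H.mkQ (Y x) = x := by
    intro x hx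
    have h := hYex x hx
    simp only [Y, dif_pos h]
    exact h.choose_spec
  have hG0 : (0 : V ⧸ H) ∉ convexHull ℝ (G : Set (V ⧸ H)) := by
    intro h0
    obtain ⟨w, hw0, hw1, hwsum⟩ := Finset.mem_convexHull'.mp h0
    set F : Finset (V ⧸ H) := G.filter (fun x => w x ≠ 0) with hF
    have hFne : F.Nonempty := by
      obtain ⟨x, hx, hne⟩ := Finset.exists_ne_zero_of_sum_ne_zero
        (hw1.symm ▸ one_ne_zero : ∑ x ∈ G, w x ≠ 0)
      exact ⟨x, Finset.mem_filter.mpr ⟨hx, hne⟩⟩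
    have hsumF : ∑ x ∈ F, w x • Y x ∈ H := by
      rw [← Submodule.Quotient.mk_eq_zero H, ← H.mkQ_apply, map_sum]
      have : ∀ x ∈ F, H.mkQ (w x • Y x) = w x • x := by
        intro x hx
        rw [map_smul, (hY x (Finset.mem_filter.mp hx).1).2]
      rw [Finset.sum_congr rfl this]
      rw [Finset.sum_filter_of_ne (by intro x hx hne hw; exact hne (by rw [hw, zero_smul]))]
      exact hwsum
    exact no_vanishing_combo hCconv hCcone hCH F hFne w Y
      (fun x hx => lt_of_le_of_ne (hw0 x (Finset.mem_filter.mp hx).1)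
        (Ne.symm (Finset.mem_filter.mp hx).2))
      (fun x hx => (Finset.mem_filter.mp ((hY x (Finset.mem_filter.mp hx).1).1)).2.1)
      (fun x hx => (Finset.mem_filter.mp ((hY x (Finset.mem_filter.mp hx).1).1)).2.2)
      hsumF
  obtain ⟨L, hL⟩ := exists_pos_functional G hG0
  have hfmono : StrictMono f := f.monotone'.strictMono_of_injective f.toRingHom.injective
  have hcpos : ∀ y2 ∈ T, 0 < f (L (H.mkQ y2)) := by
    intro y2 hy2
    have : 0 < L (H.mkQ y2) := hL _ (Finset.mem_image_of_mem _ hy2)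
    have := hfmono this
    rwa [map_zero] at this
  obtain ⟨r₀, hr₀⟩ := Finset.exists_le
    (T.image fun y2 => (-(φ (πH y2))) / f (L (H.mkQ y2)))
  set r : R := r₀ + 1 with hr
  refine ⟨fun v => φ (πH v) + r * f (L (H.mkQ v)), ?_, ?_, ?_, ?_, ?_⟩
  · intro v w
    dsimp only
    rw [map_add, hadd, map_add, map_add, map_add]
    ring
  · intro r₁ v
    dsimp only
    rw [map_smul, hsmul, map_smul, map_smul, smul_eq_mul, map_mul]
    ring
  · intro h
    dsimp only
    rw [Submodule.projectionOnto_apply_left hcompl h, H.mkQ_apply,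
      (Submodule.Quotient.mk_eq_zero H).mpr h.2, map_zero, map_zero, mul_zero, add_zero]
  · intro y hyC hyH
    have h1 : πH y = ⟨y, hyH⟩ := Submodule.projectionOnto_apply_left hcompl ⟨y, hyH⟩
    have h2 : H.mkQ y = 0 := by
      rw [H.mkQ_apply]; exact (Submodule.Quotient.mk_eq_zero H).mpr hyH
    dsimp only
    rw [h1, h2, map_zero, map_zero, mul_zero, add_zero]
    exact hpos ⟨y, hyH⟩ hyC
  · intro y hyS hyC hyH
    have hyT : y ∈ T := Finset.mem_filter.mpr ⟨hyS, hyC, hyH⟩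
    have hc := hcpos y hyT
    have hratio : (-(φ (πH y))) / f (L (H.mkQ y)) ≤ r₀ :=
      hr₀ _ (Finset.mem_image_of_mem _ hyT)
    have h2 : -(φ (πH y)) ≤ r₀ * f (L (H.mkQ y)) := (div_le_iff₀ hc).mp hratio
    have h3 : r₀ * f (L (H.mkQ y)) < r * f (L (H.mkQ y)) :=
      mul_lt_mul_of_pos_right (by rw [hr]; linarith) hc
    dsimp only
    linarith



/-- **Extension theorem for positive functionals.** Let `C` be a convex cone in a real vector
space `V` and `H ⊆ V` a subspace with `(C + H) ∩ (-(C + H)) = H`.  Every `ℝ`-linear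
functional `φ : H → R` (with `R` a real closed extension field of `ℝ`) which is nonnegative
on `C ∩ H` extends to an `ℝ`-linear functional `φ̄ : V → R'`, for some real closed extension
field `R'` of `R`, which is nonnegative on `C` and strictly positive on `C \ H`. -/
theorem real_closed_extension_of_positive_functional
    {V : Type u} [AddCommGroup V] [Module ℝ V]
    (C : Set V) (hCconv : Convex ℝ C)
    (hCcone : ∀ y ∈ C, ∀ r : ℝ, 0 < r → r • y ∈ C)
    (H : Submodule ℝ V)
    (hCH : (C + (H : Set V)) ∩ (-(C + (H : Set V))) = (H : Set V))
    (R : Type v) [Field R] [LinearOrder R] [IsStrictOrderedRing R] (f : ℝ →+*o R) (hR : IsRealClosed' R)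
    (φ : H → R)
    (hadd : ∀ a b : H, φ (a + b) = φ a + φ b)
    (hsmul : ∀ (r : ℝ) (a : H), φ (r • a) = f r * φ a)
    (hpos : ∀ a : H, (a : V) ∈ C → 0 ≤ φ a) :
    ∃ (R' : Type (max u v)) (_ : Field R') (_ : LinearOrder R') (_ : IsStrictOrderedRing R') (g : R →+*o R') (φbar : V → R'),
      IsRealClosed' R' ∧
      (∀ v w : V, φbar (v + w) = φbar v + φbar w) ∧
      (∀ (r : ℝ) (v : V), φbar (r • v) = g (f r) * φbar v) ∧
      (∀ h : H, φbar (h : V) = g (φ h)) ∧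
      (∀ y ∈ C, 0 ≤ φbar y) ∧
      (∀ y ∈ C, y ∉ (H : Set V) → 0 < φbar y) := by
  classical
  have FIN := finite_step C hCconv hCcone H hCH R f φ hadd hsmul hpos
  choose Ψ hΨadd hΨsmul hΨH hΨnn hΨpos using FIN
  haveI : Nonempty (Finset V) := ⟨∅⟩
  haveI hNB : (atTop : Filter (Finset V)).NeBot := atTop_neBot
  set U : Ultrafilter (Finset V) := Ultrafilter.of atTop with hUdef
  have hUle : (U : Filter (Finset V)) ≤ atTop := Ultrafilter.of_le atTop
  let g : R →+*o Germ (U : Filter (Finset V)) R :=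
    { toFun := fun x => (↑x : Germ (U : Filter (Finset V)) R)
      map_one' := rfl
      map_mul' := fun a b => rfl
      map_zero' := rfl
      map_add' := fun a b => rfl
      monotone' := fun a b h => Germ.const_le h }
  have hev : ∀ y : V, ∀ᶠ S in (U : Filter (Finset V)), y ∈ S := by
    intro y
    have h1 : ∀ᶠ S in (atTop : Filter (Finset V)), y ∈ S :=
      Filter.eventually_atTop.mpr ⟨{y}, fun S hS => Finset.singleton_subset_iff.mp hS⟩
    exact h1.filter_mono hUle
  have key : ∀ y ∈ C, y ∉ (H : Set V) →
      0 < (((fun S => Ψ S y) : Finset V → R) : Germ (U : Filter (Finset V)) R) := by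
    intro y hy hyH
    have hyH' : y ∉ H := fun h => hyH h
    exact Germ.coe_pos.mpr ((hev y).mono fun S hS => hΨpos S y hS hy hyH')
  refine ⟨Germ (U : Filter (Finset V)) R, inferInstance, inferInstance, inferInstance, g,
    fun v => (((fun S => Ψ S v) : Finset V → R) : Germ (U : Filter (Finset V)) R),
    isRealClosed_germ hR, ?_, ?_, ?_, ?_, ?_⟩
  · intro v w
    have h1 : ((fun S => Ψ S (v + w)) : Finset V → R)
        = ((fun S => Ψ S v) + (fun S => Ψ S w)) := funext fun S => hΨadd S v w
    show (((fun S => Ψ S (v + w)) : Finset V → R) : Germ (U : Filter (Finset V)) R) = _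
    rw [h1, Germ.coe_add]
  · intro r v
    have h1 : ((fun S => Ψ S (r • v)) : Finset V → R)
        = ((fun _ => f r) * (fun S => Ψ S v)) := funext fun S => hΨsmul S r v
    show (((fun S => Ψ S (r • v)) : Finset V → R) : Germ (U : Filter (Finset V)) R) = _
    rw [h1, Germ.coe_mul]
    rfl
  · intro h
    exact congrArg Germ.ofFun (funext fun S => hΨH S h)
  · intro y hy
    by_cases hyH : y ∈ H
    · rw [← Germ.coe_zero]
      exact Germ.coe_le.mpr (Filter.Eventually.of_forall fun S => by
        simpa using hΨnn S y hy hyH)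
    · exact le_of_lt (key y hy (by simpa using hyH))
  · exact key
end

section
/- Let R be a real closed extension field of ℝ containing an element ε with 0 < ε < r for every real number r > 0. Define the ℝ-linear functional ψ : ℝ[t] → R by ψ(p) := p(0) + ε·p''(0). Then ψ(p) ≥ 0 for every polynomial p ∈ ℝ[t] with p(x) ≥ 0 for all x ∈ ℝ, but ψ fails the Cauchy–Schwarz inequality: for a = 1 + t² one has ψ(a)² > ψ(a²)·ψ(1); indeed ψ(a)² = 1 + 4ε + 4ε² while ψ(a²)·ψ(1) = 1 + 4ε. -/
open Polynomial

/-- The functional `ψ(p) = p(0) + ε·p''(0)` on `ℝ[t]`, with values in an extension field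
`R` of `ℝ` (via `f : ℝ →+*o R`) and with `ε ∈ R`. -/
noncomputable def psi {R : Type*} [Field R] [LinearOrder R] [IsStrictOrderedRing R] (f : ℝ →+*o R) (ε : R)
    (p : Polynomial ℝ) : R :=
  f (p.eval 0) + ε * f ((derivative (derivative p)).eval 0)

lemma aux_dd_nonneg (p : ℝ[X]) (hp : ∀ x : ℝ, 0 ≤ p.eval x) (h0 : p.eval 0 = 0) :
    0 ≤ (derivative (derivative p)).eval 0 := by
  obtain ⟨q, rfl⟩ : X ∣ p := X_dvd_iff.2 (by rw [coeff_zero_eq_eval_zero]; exact h0)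
  have hq0 : q.eval 0 = 0 := by
    have h1 : q.eval 0 ≤ 0 := by
      refine le_of_tendsto (q.continuous.continuousWithinAt :
        Filter.Tendsto (fun x => q.eval x) (nhdsWithin 0 (Set.Iio 0)) (nhds (q.eval 0))) ?_
      filter_upwards [self_mem_nhdsWithin] with x (hx : x < 0)
      have := hp x
      simp only [eval_mul, eval_X] at this
      nlinarith
    have h2 : 0 ≤ q.eval 0 := by
      refine ge_of_tendsto (q.continuous.continuousWithinAt :
        Filter.Tendsto (fun x => q.eval x) (nhdsWithin 0 (Set.Ioi 0)) (nhds (q.eval 0))) ?_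
      filter_upwards [self_mem_nhdsWithin] with x (hx : 0 < x)
      have := hp x
      simp only [eval_mul, eval_X] at this
      nlinarith
    linarith
  obtain ⟨r, rfl⟩ : X ∣ q := X_dvd_iff.2 (by rw [coeff_zero_eq_eval_zero]; exact hq0)
  have hr0 : 0 ≤ r.eval 0 := by
    refine ge_of_tendsto (r.continuous.continuousWithinAt :
      Filter.Tendsto (fun x => r.eval x) (nhdsWithin 0 {(0:ℝ)}ᶜ) (nhds (r.eval 0))) ?_
    filter_upwards [self_mem_nhdsWithin] with x (hx : x ≠ 0)
    have := hp x
    simp only [eval_mul, eval_X] at this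
    have hx2 : 0 < x * x := mul_self_pos.2 hx
    nlinarith
  have hcalc : (derivative (derivative (X * (X * r)))).eval 0 = 2 * r.eval 0 := by
    simp [derivative_mul]
    ring
  linarith

/-- **A positive functional failing the Cauchy–Schwarz inequality.**  Let `R` be a real
closed extension field of `ℝ` containing an element `ε` with `0 < ε < r` for every real
`r > 0`.  The functional `ψ(p) = p(0) + ε·p''(0)` is nonnegative on all polynomials that are
pointwise nonnegative on `ℝ`, yet for `a = 1 + t²` one has
`ψ(a)² = 1 + 4ε + 4ε² > 1 + 4ε = ψ(a²)·ψ(1)`. -/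
theorem psi_positive_not_cauchy_schwarz
    {R : Type*} [Field R] [LinearOrder R] [IsStrictOrderedRing R] (f : ℝ →+*o R) (hR : IsRealClosed' R)
    (ε : R) (hε : 0 < ε) (hεinf : ∀ r : ℝ, 0 < r → ε < f r) :
    (∀ p : Polynomial ℝ, (∀ x : ℝ, 0 ≤ p.eval x) → 0 ≤ psi f ε p) ∧
    psi f ε (1 + X ^ 2) ^ 2 = 1 + 4 * ε + 4 * ε ^ 2 ∧
    psi f ε ((1 + X ^ 2) ^ 2) * psi f ε 1 = 1 + 4 * ε ∧
    psi f ε ((1 + X ^ 2) ^ 2) * psi f ε 1 < psi f ε (1 + X ^ 2) ^ 2 := by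
  have fpos : ∀ r : ℝ, 0 < r → (0:R) < f r := fun r hr => hε.trans (hεinf r hr)
  have key : ∀ p : Polynomial ℝ, (∀ x : ℝ, 0 ≤ p.eval x) → 0 ≤ psi f ε p := by
    intro p hp
    have h0 : 0 ≤ p.eval 0 := hp 0
    set a := p.eval 0 with ha
    set b := (derivative (derivative p)).eval 0 with hb
    have hfa : (0:R) ≤ f a := by
      rcases h0.lt_or_eq with h | h
      · exact (fpos a h).le
      · simp [← h]
    by_cases hbpos : 0 ≤ b
    · have hfb : (0:R) ≤ f b := by
        rcases hbpos.lt_or_eq with h | h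
        · exact (fpos b h).le
        · simp [← h]
      have : 0 ≤ ε * f b := mul_nonneg hε.le hfb
      unfold psi; linarith
    · push_neg at hbpos
      have ha0 : a ≠ 0 := by
        intro h
        exact absurd (aux_dd_nonneg p hp h) (not_le.2 hbpos)
      have hapos : 0 < a := h0.lt_of_ne (Ne.symm ha0)
      have hnb : 0 < -b := by linarith
      have h1 : ε < f (a / (-b)) := hεinf _ (by positivity)
      have h2 : (0:R) < f (-b) := fpos _ hnb
      have h3 : ε * f (-b) < f (a / (-b)) * f (-b) := mul_lt_mul_of_pos_right h1 h2
      have h4 : f (a / (-b)) * f (-b) = f a := by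
        rw [← map_mul, div_mul_cancel₀ a (ne_of_gt hnb)]
      have h6 : ε * f (-b) = - (ε * f b) := by rw [map_neg f b]; ring
      unfold psi
      linarith [h3, h4, h6]
  have e1 : psi f ε (1 + X ^ 2) = 1 + 2 * ε := by
    simp [psi, map_ofNat]
    ring
  have e2 : psi f ε ((1 + X ^ 2) ^ 2) = 1 + 4 * ε := by
    simp [psi, derivative_pow, map_ofNat]
    ring
  have e3 : psi f ε 1 = 1 := by simp [psi, map_ofNat]
  refine ⟨key, ?_, ?_, ?_⟩
  · rw [e1]; ring
  · rw [e2, e3]; ring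
  · rw [e1, e2, e3]; nlinarith [hε]
end

section
/- Let A be a ℂ-algebra with involution, R a real closed extension field of ℝ, and C = R[i]. Let φ : A → C be a ℂ-linear functional with φ(a*) = conj(φ(a)) for all a ∈ A. Equip the C-algebra C ⊗_ℂ A with the involution determined by (z ⊗ a)* := conj(z) ⊗ a*. Then φ is completely positive if and only if the C-linear extension id ⊗ φ : C ⊗_ℂ A → C (determined by z ⊗ a ↦ z·φ(a)) is positive, i.e. (id ⊗ φ)(x*x) ≥ 0 for every x ∈ C ⊗_ℂ A. -/
open Polynomial Matrix

noncomputable section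

set_option maxRecDepth 8000

/-- `Cplx R = R[i] = R[X]/(X² + 1)`. -/
abbrev Cplx (R : Type*) [CommRing R] : Type _ := AdjoinRoot (X ^ 2 + 1 : R[X])

namespace Cplx

variable (R : Type*) [CommRing R]

/-- The imaginary unit `i` of `R[i]`. -/
def I : Cplx R := AdjoinRoot.root _

theorem I_sq : (I R) ^ 2 = -1 := by
  have h : (I R) ^ 2 + 1 = 0 := by
    have h := AdjoinRoot.eval₂_root (X ^ 2 + 1 : R[X])
    simp only [eval₂_add, eval₂_pow, eval₂_X, eval₂_one] at h
    exact h
  exact eq_neg_of_add_eq_zero_left h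

variable {R}

/-- Conjugation on `R[i]`: the `R`-algebra involution determined by `i ↦ -i`. -/
def conj : Cplx R →+* Cplx R :=
  AdjoinRoot.lift (algebraMap R _) (-(I R)) (by
    have h : (I R) ^ 2 + 1 = 0 := by
      have h := AdjoinRoot.eval₂_root (X ^ 2 + 1 : R[X])
      simp only [eval₂_add, eval₂_pow, eval₂_X, eval₂_one] at h
      exact h
    simp only [eval₂_add, eval₂_pow, eval₂_X, eval₂_one]
    calc (-(I R)) ^ 2 + 1 = (I R) ^ 2 + 1 := by ring
    _ = 0 := h)

/-- `z ∈ R[i]` is *nonnegative* if it lies in `R` and is nonnegative there. -/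
def nonneg {R' : Type*} [Field R'] [LinearOrder R'] [IsStrictOrderedRing R'] (z : Cplx R') : Prop :=
  ∃ r : R', 0 ≤ r ∧ z = algebraMap R' (Cplx R') r

/-- `z ∈ R[i]` is *positive* if it lies in `R` and is positive there. -/
def pos {R' : Type*} [Field R'] [LinearOrder R'] [IsStrictOrderedRing R'] (z : Cplx R') : Prop :=
  ∃ r : R', 0 < r ∧ z = algebraMap R' (Cplx R') r

/-- The embedding `ℂ = ℝ[i] → R[i]` induced by an embedding `f : ℝ → R`,
`x + y·i ↦ f x + f y · i`. -/
def emb (f : ℝ →+* R) : ℂ →+* Cplx R where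
  toFun z := algebraMap R (Cplx R) (f z.re) + algebraMap R (Cplx R) (f z.im) * I R
  map_one' := by simp
  map_zero' := by simp
  map_add' z w := by
    simp only [Complex.add_re, Complex.add_im, map_add]
    ring
  map_mul' z w := by
    have hI : (I R) ^ 2 = -1 := I_sq R
    simp only [Complex.mul_re, Complex.mul_im, map_add, map_sub, _root_.map_mul]
    linear_combination (-(algebraMap R (Cplx R) (f z.im) * algebraMap R (Cplx R) (f w.im))) * hI

/-- A matrix with entries in `R[i]` is positive semidefinite if
`∑ⱼₖ conj(zⱼ)·zₖ·Mⱼₖ ≥ 0` for all vectors `z`. -/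
def PSD {R' : Type*} [Field R'] [LinearOrder R'] [IsStrictOrderedRing R'] {m : ℕ}
    (M : Matrix (Fin m) (Fin m) (Cplx R')) : Prop :=
  ∀ z : Fin m → Cplx R', Cplx.nonneg (∑ j, ∑ k, Cplx.conj (z j) * z k * M j k)

end Cplx

section StarAlgebra

variable {R : Type*} [Field R] [LinearOrder R] [IsStrictOrderedRing R]
variable {A : Type*} [NonUnitalRing A] [Module ℂ A] [StarRing A] [StarModule ℂ A]

/-- `φ : A → R[i]` is `ℂ`-linear (via the embedding `ℂ → R[i]` induced by `f`) and
compatible with the involutions: `φ(a*) = conj (φ a)`. -/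
def IsHermitianLinear (f : ℝ →+* R) (φ : A → Cplx R) : Prop :=
  (∀ a b : A, φ (a + b) = φ a + φ b) ∧
  (∀ (c : ℂ) (a : A), φ (c • a) = Cplx.emb f c * φ a) ∧
  (∀ a : A, φ (star a) = Cplx.conj (φ a))

/-- `φ : A → R[i]` is *completely positive* if for every `m` the entrywise map
`Mₘ(A) → Mₘ(R[i])` maps sums of hermitian squares to positive semidefinite matrices. -/
def CompletelyPositive (φ : A → Cplx R) : Prop :=
  ∀ (m n : ℕ) (B : Fin n → Matrix (Fin m) (Fin m) A),
    Cplx.PSD (fun j k => φ ((∑ l, (B l)ᴴ * B l) j k))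

/-- The set of sums of hermitian squares in a `*`-algebra. -/
def SumsOfSquares (A : Type*) [NonUnitalRing A] [Star A] : Set A :=
  {x | ∃ (n : ℕ) (a : Fin n → A), x = ∑ i, star (a i) * a i}

end StarAlgebra

universe u v

lemma Cplx.nonneg_zero {R' : Type*} [Field R'] [LinearOrder R'] [IsStrictOrderedRing R'] : Cplx.nonneg (0 : Cplx R') :=
  ⟨0, le_rfl, by simp⟩

lemma Cplx.nonneg_add {R' : Type*} [Field R'] [LinearOrder R'] [IsStrictOrderedRing R'] {x y : Cplx R'}
    (hx : Cplx.nonneg x) (hy : Cplx.nonneg y) : Cplx.nonneg (x + y) := by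
  obtain ⟨r, hr, rfl⟩ := hx
  obtain ⟨s, hs, rfl⟩ := hy
  exact ⟨r + s, add_nonneg hr hs, by rw [map_add]⟩

lemma Cplx.nonneg_sum {R' : Type*} [Field R'] [LinearOrder R'] [IsStrictOrderedRing R'] {ι : Type*} (s : Finset ι)
    (g : ι → Cplx R') (h : ∀ i ∈ s, Cplx.nonneg (g i)) : Cplx.nonneg (∑ i ∈ s, g i) := by
  classical
  induction s using Finset.induction with
  | empty => simpa using Cplx.nonneg_zero
  | insert _ _ hni ih =>
    rw [Finset.sum_insert hni]
    exact Cplx.nonneg_add (h _ (Finset.mem_insert_self _ _))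
      (ih fun i hi => h i (Finset.mem_insert_of_mem hi))

/-- **Complete positivity equals positivity of the extension to `C ⊗_ℂ A`.**
Let `A` be a `ℂ`-algebra with involution, `R` a real closed extension field of `ℝ` and
`C = R[i]`.  A `ℂ`-linear functional `φ : A → C` with `φ(a*) = conj (φ a)` is completely
positive if and only if the `C`-linear extension `id ⊗ φ : C ⊗_ℂ A → C`, `z ⊗ a ↦ z·φ(a)`,
is positive; i.e. (evaluating `(id ⊗ φ)(x* x)` at a generic element `x = ∑ⱼ zⱼ ⊗ aⱼ` of
`C ⊗_ℂ A`) if and only if `∑ⱼₖ conj(zⱼ)·zₖ·φ(aⱼ* aₖ) ≥ 0` for all `zⱼ ∈ C`, `aⱼ ∈ A`. -/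
theorem completelyPositive_iff_extension_positive
    {R : Type u} [Field R] [LinearOrder R] [IsStrictOrderedRing R] (f : ℝ →+*o R) (hR : IsRealClosed' R)
    {A : Type v} [NonUnitalRing A] [Module ℂ A] [SMulCommClass ℂ A A] [IsScalarTower ℂ A A]
    [StarRing A] [StarModule ℂ A]
    (φ : A → Cplx R) (hφ : IsHermitianLinear f.toRingHom φ) :
    CompletelyPositive φ ↔
      ∀ (m : ℕ) (z : Fin m → Cplx R) (a : Fin m → A),
        Cplx.nonneg (∑ j, ∑ k, Cplx.conj (z j) * z k * φ (star (a j) * a k)) := by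
  classical
  obtain ⟨hadd, hsmul, hstar⟩ := hφ
  have hzero : φ 0 = 0 := by
    have h := hadd 0 0
    rw [add_zero] at h
    exact (right_eq_add.mp h)
  let φ' : A →+ Cplx R := AddMonoidHom.mk' φ hadd
  have hsum : ∀ {ι : Type} (s : Finset ι) (g : ι → A),
      φ (∑ i ∈ s, g i) = ∑ i ∈ s, φ (g i) := fun s g => map_sum φ' g s
  constructor
  · intro h m z a
    rcases Nat.eq_zero_or_pos m with hm | hm
    · subst hm
      simpa using Cplx.nonneg_zero
    · set i0 : Fin m := ⟨0, hm⟩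
      set B : Fin 1 → Matrix (Fin m) (Fin m) A :=
        fun _ => Matrix.of fun p q => if p = i0 then a q else 0 with hB
      have key : ∀ j k, (∑ l : Fin 1, (B l)ᴴ * B l) j k = star (a j) * a k := by
        intro j k
        rw [Matrix.sum_apply]
        rw [Fin.sum_univ_one]
        rw [Matrix.mul_apply]
        have : ∀ p, (B 0)ᴴ j p * (B 0) p k
            = if p = i0 then star (a j) * a k else 0 := by
          intro p
          simp only [Matrix.conjTranspose_apply, hB, Matrix.of_apply]
          by_cases hp : p = i0 <;> simp [hp]
        rw [Finset.sum_congr rfl fun p _ => this p]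
        simp
      have := h m 1 B z
      simpa only [key] using this
  · intro h m n B z
    have expand : ∀ j k, φ ((∑ l, (B l)ᴴ * B l) j k)
        = ∑ l, ∑ p, φ (star (B l p j) * B l p k) := by
      intro j k
      have : (∑ l, (B l)ᴴ * B l) j k = ∑ l, ∑ p, star (B l p j) * B l p k := by
        rw [Matrix.sum_apply]
        exact Finset.sum_congr rfl fun l _ => by
          rw [Matrix.mul_apply]
          exact Finset.sum_congr rfl fun p _ => by rw [Matrix.conjTranspose_apply]
      rw [this, hsum]
      exact Finset.sum_congr rfl fun l _ => hsum _ _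
    have rearr : (∑ j, ∑ k, Cplx.conj (z j) * z k * φ ((∑ l, (B l)ᴴ * B l) j k))
        = ∑ l, ∑ p, ∑ j, ∑ k, Cplx.conj (z j) * z k * φ (star (B l p j) * B l p k) := by
      simp only [expand, Finset.mul_sum]
      set X : Fin m → Fin m → Fin n → Fin m → Cplx R :=
        fun j k l p => Cplx.conj (z j) * z k * φ (star (B l p j) * B l p k) with hX
      calc (∑ j, ∑ k, ∑ l, ∑ p, X j k l p)
          = ∑ j, ∑ l, ∑ k, ∑ p, X j k l p :=
            Finset.sum_congr rfl fun j _ => Finset.sum_comm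
        _ = ∑ l, ∑ j, ∑ k, ∑ p, X j k l p := Finset.sum_comm
        _ = ∑ l, ∑ j, ∑ p, ∑ k, X j k l p :=
            Finset.sum_congr rfl fun l _ =>
              Finset.sum_congr rfl fun j _ => Finset.sum_comm
        _ = ∑ l, ∑ p, ∑ j, ∑ k, X j k l p :=
            Finset.sum_congr rfl fun l _ => Finset.sum_comm
    rw [rearr]
    refine Cplx.nonneg_sum _ _ fun l _ => Cplx.nonneg_sum _ _ fun p _ => ?_
    exact h m z fun q => B l p q
end
end

section
/- Let Γ be a group. Then for every a ∈ ℂ[Γ] one has ‖a‖₁²·1 − a*a ∈ Σ²ℂ[Γ]. -/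
noncomputable section

universe u

variable (Γ : Type u) [Group Γ]

/-- The involution of the complex group algebra `ℂ[Γ]`:
`(∑ a_g·g)* = ∑ conj(a_g)·g⁻¹`. -/
def gstar (a : MonoidAlgebra ℂ Γ) : MonoidAlgebra ℂ Γ :=
  a.coeff.sum fun g c => MonoidAlgebra.single g⁻¹ (starRingEnd ℂ c)

/-- The `ℓ¹`-norm of an element of `ℂ[Γ]`: `‖∑ a_g·g‖₁ = ∑ |a_g|`. -/
def l1norm (a : MonoidAlgebra ℂ Γ) : ℝ :=
  a.coeff.sum fun _ c => ‖c‖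

/-- The set `Σ²ℂ[Γ]` of sums of hermitian squares in the group algebra. -/
def SOS : Set (MonoidAlgebra ℂ Γ) :=
  {x | ∃ (n : ℕ) (a : Fin n → MonoidAlgebra ℂ Γ), x = ∑ i, gstar Γ (a i) * a i}

/-- The hermitian elements `ℂ[Γ]^h = {a : a* = a}`. -/
def herm : Set (MonoidAlgebra ℂ Γ) := {a | gstar Γ a = a}

/-- The augmentation homomorphism `ε : ℂ[Γ] → ℂ`, `∑ a_g·g ↦ ∑ a_g`. -/
def aug : MonoidAlgebra ℂ Γ →ₐ[ℂ] ℂ := MonoidAlgebra.lift ℂ ℂ Γ 1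

/-- The augmentation ideal `ω(Γ) = ker ε`. -/
def omega : Set (MonoidAlgebra ℂ Γ) := {a | aug Γ a = 0}

/-- The hermitian part `ω(Γ)^h` of the augmentation ideal. -/
def omegaH : Set (MonoidAlgebra ℂ Γ) := {a | a ∈ omega Γ ∧ gstar Γ a = a}

/-- `Σ²ω(Γ)`: sums of hermitian squares of elements of the augmentation ideal. -/
def SOSomega : Set (MonoidAlgebra ℂ Γ) :=
  {x | ∃ (n : ℕ) (a : Fin n → MonoidAlgebra ℂ Γ),
    (∀ i, a i ∈ omega Γ) ∧ x = ∑ i, gstar Γ (a i) * a i}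

/-- `ω²(Γ)`, the `ℂ`-span of products of two elements of the augmentation ideal. -/
def omegaSq : Set (MonoidAlgebra ℂ Γ) :=
  (Submodule.span ℂ {x : MonoidAlgebra ℂ Γ |
    ∃ a ∈ omega Γ, ∃ b ∈ omega Γ, x = a * b} : Submodule ℂ (MonoidAlgebra ℂ Γ))

/-- `c(g) = g - 1 ∈ ω(Γ)`. -/
def cE (g : Γ) : MonoidAlgebra ℂ Γ := MonoidAlgebra.of ℂ Γ g - 1

/-- The Laplace operator `Δ(S) = |S| - ∑_{s ∈ S} s` of a finite subset `S ⊆ Γ`. -/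
def Delta (S : Finset Γ) : MonoidAlgebra ℂ Γ :=
  (S.card : MonoidAlgebra ℂ Γ) - ∑ s ∈ S, MonoidAlgebra.of ℂ Γ s


lemma gstar_single (g : Γ) (c : ℂ) :
    gstar Γ (MonoidAlgebra.single g c) = MonoidAlgebra.single g⁻¹ (starRingEnd ℂ c) :=
  Finsupp.sum_single_index (by simp)

lemma gstar_sub (x y : MonoidAlgebra ℂ Γ) :
    gstar Γ (x - y) = gstar Γ x - gstar Γ y :=
  Finsupp.sum_sub_index (fun g b₁ b₂ => by simp [Finsupp.single_sub])

lemma gstar_smul (c : ℂ) (x : MonoidAlgebra ℂ Γ) :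
    gstar Γ (c • x) = (starRingEnd ℂ c) • gstar Γ x := by
  unfold gstar
  rw [MonoidAlgebra.coeff_smul, Finsupp.sum_smul_index' (fun g => by simp), Finsupp.smul_sum]
  exact Finsupp.sum_congr fun g _ => by
    simp [MonoidAlgebra.smul_single, smul_eq_mul, map_mul]

lemma sum_mem_SOS {ι : Type*} [Fintype ι] (b : ι → MonoidAlgebra ℂ Γ) :
    (∑ i, gstar Γ (b i) * b i) ∈ SOS Γ :=
  ⟨Fintype.card ι, fun j => b ((Fintype.equivFin ι).symm j),
    ((Fintype.equivFin ι).symm.sum_comp fun i => gstar Γ (b i) * b i).symm⟩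


/-- For every group `Γ` and every `a ∈ ℂ[Γ]` one has `‖a‖₁² - a*a ∈ Σ²ℂ[Γ]`. -/
theorem l1norm_sq_sub_star_mul_mem_SOS (a : MonoidAlgebra ℂ Γ) :
    ((l1norm Γ a ^ 2 : ℝ) : ℂ) • (1 : MonoidAlgebra ℂ Γ) - gstar Γ a * a ∈ SOS Γ := by
  classical
  set s := a.coeff.support with hs
  set v : Γ → ℝ := fun g => ‖a.coeff g‖ with hv
  set u : Γ → ℂ := fun g => a.coeff g / (v g : ℂ) with hu
  set b : Γ → Γ → MonoidAlgebra ℂ Γ := fun g h =>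
    ((Real.sqrt (v g * v h / 2) : ℝ) : ℂ) •
      (MonoidAlgebra.single g (u g) - MonoidAlgebra.single h (u h)) with hb
  -- basic facts on support
  have hav : ∀ g ∈ s, ((v g : ℝ) : ℂ) * u g = a.coeff g := by
    intro g hg
    have : a.coeff g ≠ 0 := Finsupp.mem_support_iff.mp hg
    have hv0 : (v g : ℂ) ≠ 0 := by
      simp [hv, Complex.ofReal_eq_zero, this]
    rw [hu]
    field_simp
  have hconj : ∀ g ∈ s, starRingEnd ℂ (a.coeff g) = ((v g : ℝ) : ℂ) * starRingEnd ℂ (u g) := by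
    intro g hg
    rw [← hav g hg]
    simp [Complex.conj_ofReal]
  have hu1 : ∀ g ∈ s, starRingEnd ℂ (u g) * u g = 1 := by
    intro g hg
    have h0 : a.coeff g ≠ 0 := Finsupp.mem_support_iff.mp hg
    have hn : Complex.normSq (u g) = 1 := by
      rw [hu]
      simp only [Complex.normSq_div, Complex.normSq_ofReal, hv]
      rw [← Complex.sq_norm, sq]
      have : ‖a.coeff g‖ ≠ 0 := by simpa using h0
      field_simp
    rw [mul_comm, Complex.mul_conj, hn]
    norm_num
  set A : Γ → Γ → MonoidAlgebra ℂ Γ := fun g h =>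
    ((v g * v h / 2 : ℝ) : ℂ) •
      MonoidAlgebra.single (g⁻¹ * h) (starRingEnd ℂ (u g) * u h) with hA
  have hterm : ∀ g ∈ s, ∀ h ∈ s, gstar Γ (b g h) * b g h =
      ((v g * v h : ℝ) : ℂ) • (1 : MonoidAlgebra ℂ Γ) - A g h - A h g := by
    intro g hg h hh
    have hq : (0:ℝ) ≤ v g * v h / 2 := by
      have := norm_nonneg (a.coeff g)
      have := norm_nonneg (a.coeff h)
      rw [hv]; positivity
    rw [hb]
    simp only
    rw [gstar_smul, Complex.conj_ofReal, gstar_sub, gstar_single, gstar_single,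
      smul_mul_smul, ← Complex.ofReal_mul, Real.mul_self_sqrt hq,
      sub_mul, mul_sub, mul_sub, MonoidAlgebra.single_mul_single,
      MonoidAlgebra.single_mul_single, MonoidAlgebra.single_mul_single,
      MonoidAlgebra.single_mul_single, inv_mul_cancel, inv_mul_cancel,
      hu1 g hg, hu1 h hh, ← MonoidAlgebra.one_def, hA]
    simp only
    rw [show ((v h * v g / 2 : ℝ) : ℂ) = ((v g * v h / 2 : ℝ) : ℂ) by push_cast; ring]
    push_cast
    match_scalars <;> ring
  have hAA : ∀ g ∈ s, ∀ h ∈ s, A g h + A g h =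
      MonoidAlgebra.single (g⁻¹ * h) (starRingEnd ℂ (a.coeff g) * a.coeff h) := by
    intro g hg h hh
    rw [hA]
    simp only
    rw [← add_smul, MonoidAlgebra.smul_single, hconj g hg, ← hav h hh]
    congr 1
    rw [smul_eq_mul]
    push_cast
    ring
  have hLHS1 : ((l1norm Γ a ^ 2 : ℝ) : ℂ) • (1 : MonoidAlgebra ℂ Γ)
      = ∑ g ∈ s, ∑ h ∈ s, ((v g * v h : ℝ) : ℂ) • (1 : MonoidAlgebra ℂ Γ) := by
    have h1 : l1norm Γ a = ∑ g ∈ s, v g := rfl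
    rw [h1, sq, Finset.sum_mul_sum]
    push_cast
    rw [Finset.sum_smul]
    exact Finset.sum_congr rfl fun g _ => by rw [Finset.sum_smul]
  have hLHS2 : gstar Γ a * a =
      ∑ g ∈ s, ∑ h ∈ s, MonoidAlgebra.single (g⁻¹ * h) (starRingEnd ℂ (a.coeff g) * a.coeff h) := by
    have h1 : gstar Γ a = ∑ g ∈ s, MonoidAlgebra.single g⁻¹ (starRingEnd ℂ (a.coeff g)) := rfl
    have h2 : a = ∑ h ∈ s, MonoidAlgebra.single h (a.coeff h) := by
      have := (MonoidAlgebra.sum_coeff_single a).symm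
      rwa [Finsupp.sum] at this
    calc gstar Γ a * a
        = (∑ g ∈ s, MonoidAlgebra.single g⁻¹ (starRingEnd ℂ (a.coeff g))) *
          (∑ h ∈ s, MonoidAlgebra.single h (a.coeff h)) := by rw [← h1, ← h2]
      _ = _ := ?_
    rw [Finset.sum_mul_sum]
    exact Finset.sum_congr rfl fun g _ => Finset.sum_congr rfl fun h _ => by
      rw [MonoidAlgebra.single_mul_single]
  have key : ((l1norm Γ a ^ 2 : ℝ) : ℂ) • (1 : MonoidAlgebra ℂ Γ) - gstar Γ a * a
      = ∑ g ∈ s, ∑ h ∈ s, gstar Γ (b g h) * b g h := by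
    rw [Finset.sum_congr rfl (fun g hg => Finset.sum_congr rfl (fun h hh => hterm g hg h hh))]
    simp only [Finset.sum_sub_distrib]
    have hswap : ∑ g ∈ s, ∑ h ∈ s, A h g = ∑ g ∈ s, ∑ h ∈ s, A g h := Finset.sum_comm
    rw [hswap, hLHS1, hLHS2, sub_sub, ← Finset.sum_add_distrib]
    congr 1
    refine Finset.sum_congr rfl fun g hg => ?_
    rw [← Finset.sum_add_distrib]
    exact Finset.sum_congr rfl fun h hh => (hAA g hg h hh).symm
  rw [key]
  have : ∑ g ∈ s, ∑ h ∈ s, gstar Γ (b g h) * b g h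
      = ∑ i : ↥s × ↥s, gstar Γ (b i.1 i.2) * b i.1 i.2 := by
    rw [Fintype.sum_prod_type,
      ← Finset.sum_coe_sort s (fun g => ∑ h ∈ s, gstar Γ (b g h) * b g h)]
    exact Finset.sum_congr rfl fun g _ => (Finset.sum_coe_sort s _).symm
  rw [this]
  exact sum_mem_SOS Γ _
end
end

section
/- For every group Γ one has Σ²ω(Γ) = Σ²ℂ[Γ] ∩ ω(Γ). -/
noncomputable section

universe u

variable (Γ : Type u) [Group Γ]

lemma aug_eq_sum (a : MonoidAlgebra ℂ Γ) : aug Γ a = a.coeff.sum fun _ c => c := by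
  conv_lhs => rw [← MonoidAlgebra.sum_coeff_single a]
  rw [map_finsuppSum]
  refine Finsupp.sum_congr fun g _ => ?_
  simp [aug, MonoidAlgebra.lift_single]

lemma aug_gstar (a : MonoidAlgebra ℂ Γ) :
    aug Γ (gstar Γ a) = starRingEnd ℂ (aug Γ a) := by
  rw [gstar, map_finsuppSum, aug_eq_sum, map_finsuppSum]
  refine Finsupp.sum_congr fun g _ => ?_
  simp [aug, MonoidAlgebra.lift_single]

/-- For any group `Γ`, `Σ²ω(Γ) = Σ²ℂ[Γ] ∩ ω(Γ)`. -/
theorem SOSomega_eq_SOS_inter_omega : SOSomega Γ = SOS Γ ∩ omega Γ := by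
  ext x
  constructor
  · rintro ⟨n, a, ha, rfl⟩
    refine ⟨⟨n, a, rfl⟩, ?_⟩
    simp only [omega, Set.mem_setOf_eq, map_sum, map_mul, aug_gstar]
    refine Finset.sum_eq_zero fun i _ => by rw [ha i]; simp
  · rintro ⟨⟨n, a, rfl⟩, hx⟩
    refine ⟨n, a, fun i => ?_, rfl⟩
    simp only [omega, Set.mem_setOf_eq, map_sum, map_mul, aug_gstar] at hx ⊢
    have h : ∀ i ∈ Finset.univ (α := Fin n),
        (0:ℝ) ≤ Complex.normSq (aug Γ (a i)) := fun i _ => Complex.normSq_nonneg _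
    have h2 : ∑ i, Complex.normSq (aug Γ (a i)) = 0 := by
      have := congrArg Complex.re hx
      simpa [Complex.mul_conj', Complex.normSq_apply] using this
    have := (Finset.sum_eq_zero_iff_of_nonneg h).mp h2 i (Finset.mem_univ i)
    exact Complex.normSq_eq_zero.mp this
end
end

section
/- Let Γ be a group generated by a finite symmetric set S. Then for every b ∈ ω²(Γ)^h there exists a constant C(b) ∈ ℝ such that both C(b)·Δ(S) + b ∈ Σ²ω(Γ) and C(b)·Δ(S) − b ∈ Σ²ω(Γ). In particular, Δ(S) is an algebraic interior point of the cone Σ²ω(Γ) in the real vector space ω²(Γ)^h, and if ω²(Γ) = ω(Γ), then Δ(S) is an algebraic interior point of Σ²ω(Γ) in ω(Γ)^h. -/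
noncomputable section

universe u

variable (Γ : Type u) [Group Γ]

namespace LapAux

open MonoidAlgebra

variable {Γ : Type u} [Group Γ]

lemma gstar_single (g : Γ) (c : ℂ) :
    gstar Γ (MonoidAlgebra.single g c) = MonoidAlgebra.single g⁻¹ (starRingEnd ℂ c) := by
  classical
  unfold gstar
  rw [MonoidAlgebra.coeff_single, Finsupp.sum_single_index] <;> simp

lemma gstar_zero : gstar Γ (0 : MonoidAlgebra ℂ Γ) = 0 := by
  simp [gstar]

lemma gstar_add (a b : MonoidAlgebra ℂ Γ) :
    gstar Γ (a + b) = gstar Γ a + gstar Γ b := by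
  unfold gstar
  rw [MonoidAlgebra.coeff_add, Finsupp.sum_add_index'] <;> simp [MonoidAlgebra.single_add]

lemma gstar_smul (c : ℂ) (a : MonoidAlgebra ℂ Γ) :
    gstar Γ (c • a) = (starRingEnd ℂ c) • gstar Γ a := by
  unfold gstar
  rw [MonoidAlgebra.coeff_smul, Finsupp.sum_smul_index (by simp)]
  rw [Finsupp.smul_sum]
  refine Finsupp.sum_congr fun g hg => ?_
  rw [map_mul, MonoidAlgebra.smul_single, smul_eq_mul]


/-- `gstar` as an additive monoid hom. -/
def gstarHom : MonoidAlgebra ℂ Γ →+ MonoidAlgebra ℂ Γ where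
  toFun := gstar Γ
  map_zero' := gstar_zero
  map_add' := gstar_add

lemma gstar_sub (a b : MonoidAlgebra ℂ Γ) :
    gstar Γ (a - b) = gstar Γ a - gstar Γ b :=
  map_sub (gstarHom (Γ := Γ)) a b

lemma gstar_neg (a : MonoidAlgebra ℂ Γ) : gstar Γ (-a) = - gstar Γ a :=
  map_neg (gstarHom (Γ := Γ)) a

lemma gstar_of (g : Γ) :
    gstar Γ (MonoidAlgebra.of ℂ Γ g) = MonoidAlgebra.of ℂ Γ g⁻¹ := by
  rw [MonoidAlgebra.of_apply, MonoidAlgebra.of_apply, gstar_single, map_one]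

lemma gstar_one : gstar Γ (1 : MonoidAlgebra ℂ Γ) = 1 := by
  have := gstar_of (Γ := Γ) 1
  simpa [MonoidAlgebra.one_def] using this

lemma gstar_mul (a b : MonoidAlgebra ℂ Γ) :
    gstar Γ (a * b) = gstar Γ b * gstar Γ a := by
  induction a using MonoidAlgebra.induction_linear with
  | zero => simp [gstar_zero]
  | add f g hf hg => rw [add_mul, gstar_add, gstar_add, hf, hg, mul_add]
  | single g c =>
    induction b using MonoidAlgebra.induction_linear with
    | zero => simp [gstar_zero]
    | add f g' hf hg' => rw [mul_add, gstar_add, gstar_add, hf, hg', add_mul]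
    | single h d =>
      show gstar Γ (MonoidAlgebra.single g c * MonoidAlgebra.single h d) = _
      rw [MonoidAlgebra.single_mul_single, gstar_single, gstar_single, gstar_single,
        MonoidAlgebra.single_mul_single, mul_inv_rev, map_mul, mul_comm]

lemma gstar_gstar (a : MonoidAlgebra ℂ Γ) : gstar Γ (gstar Γ a) = a := by
  induction a using MonoidAlgebra.induction_linear with
  | zero => simp [gstar_zero]
  | add f g hf hg => rw [gstar_add, gstar_add, hf, hg]
  | single g c =>
    show gstar Γ (gstar Γ (MonoidAlgebra.single g c)) = _
    rw [gstar_single, gstar_single, inv_inv, Complex.conj_conj]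

lemma aug_single (g : Γ) (c : ℂ) : aug Γ (MonoidAlgebra.single g c) = c := by
  unfold aug
  rw [MonoidAlgebra.lift_single]
  simp

lemma aug_of (g : Γ) : aug Γ (MonoidAlgebra.of ℂ Γ g) = 1 := by
  rw [MonoidAlgebra.of_apply]; exact aug_single g 1

lemma aug_gstar (a : MonoidAlgebra ℂ Γ) :
    aug Γ (gstar Γ a) = starRingEnd ℂ (aug Γ a) := by
  induction a using MonoidAlgebra.induction_linear with
  | zero => simp [gstar_zero]
  | add f g hf hg => rw [gstar_add, map_add, map_add, hf, hg, map_add]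
  | single g c =>
    show aug Γ (gstar Γ (MonoidAlgebra.single g c)) = _
    rw [gstar_single, aug_single, aug_single]


lemma mem_omega {a : MonoidAlgebra ℂ Γ} : a ∈ omega Γ ↔ aug Γ a = 0 := Iff.rfl

lemma omega_zero : (0 : MonoidAlgebra ℂ Γ) ∈ omega Γ := by
  simp [mem_omega]

lemma omega_add {a b : MonoidAlgebra ℂ Γ} (ha : a ∈ omega Γ) (hb : b ∈ omega Γ) :
    a + b ∈ omega Γ := by
  simp [mem_omega, map_add, mem_omega.1 ha, mem_omega.1 hb]

lemma omega_sub {a b : MonoidAlgebra ℂ Γ} (ha : a ∈ omega Γ) (hb : b ∈ omega Γ) :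
    a - b ∈ omega Γ := by
  simp [mem_omega, map_sub, mem_omega.1 ha, mem_omega.1 hb]

lemma omega_smul (c : ℂ) {a : MonoidAlgebra ℂ Γ} (ha : a ∈ omega Γ) :
    c • a ∈ omega Γ := by
  simp [mem_omega, map_smul, mem_omega.1 ha]

lemma omega_gstar {a : MonoidAlgebra ℂ Γ} (ha : a ∈ omega Γ) :
    gstar Γ a ∈ omega Γ := by
  simp [mem_omega, aug_gstar, mem_omega.1 ha]

lemma omega_mul_left (x : MonoidAlgebra ℂ Γ) {a : MonoidAlgebra ℂ Γ} (ha : a ∈ omega Γ) :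
    x * a ∈ omega Γ := by
  simp [mem_omega, map_mul, mem_omega.1 ha]

lemma omega_cE (g : Γ) : cE Γ g ∈ omega Γ := by
  simp [mem_omega, cE, map_sub, MonoidAlgebra.of_apply, aug_single]

lemma SOSomega_zero : (0 : MonoidAlgebra ℂ Γ) ∈ SOSomega Γ :=
  ⟨0, fun i => i.elim0, fun i => i.elim0, by simp⟩

lemma SOSomega_sq {a : MonoidAlgebra ℂ Γ} (ha : a ∈ omega Γ) :
    gstar Γ a * a ∈ SOSomega Γ :=
  ⟨1, fun _ => a, fun _ => ha, by simp⟩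

lemma SOSomega_add {x y : MonoidAlgebra ℂ Γ} (hx : x ∈ SOSomega Γ) (hy : y ∈ SOSomega Γ) :
    x + y ∈ SOSomega Γ := by
  obtain ⟨n, a, ha, rfl⟩ := hx
  obtain ⟨m, b, hb, rfl⟩ := hy
  refine ⟨n + m, Fin.append a b, ?_, ?_⟩
  · intro i
    refine Fin.addCases (fun i => ?_) (fun i => ?_) i
    · rw [Fin.append_left]; exact ha i
    · rw [Fin.append_right]; exact hb i
  · rw [Fin.sum_univ_add]
    congr 1
    · exact Finset.sum_congr rfl fun i _ => by rw [Fin.append_left]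
    · exact Finset.sum_congr rfl fun i _ => by rw [Fin.append_right]

lemma SOSomega_sum {ι : Type*} (t : Finset ι) (f : ι → MonoidAlgebra ℂ Γ)
    (h : ∀ i ∈ t, f i ∈ SOSomega Γ) : ∑ i ∈ t, f i ∈ SOSomega Γ := by
  classical
  induction t using Finset.induction_on with
  | empty => simpa using SOSomega_zero
  | insert _ _ hg ih =>
    rw [Finset.sum_insert hg]
    exact SOSomega_add (h _ (Finset.mem_insert_self _ _))
      (ih fun i hi => h i (Finset.mem_insert_of_mem hi))

lemma SOSomega_smul {r : ℝ} (hr : 0 ≤ r) {x : MonoidAlgebra ℂ Γ} (hx : x ∈ SOSomega Γ) :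
    (r : ℂ) • x ∈ SOSomega Γ := by
  obtain ⟨n, a, ha, rfl⟩ := hx
  refine ⟨n, fun i => ((Real.sqrt r : ℂ)) • a i, fun i => omega_smul _ (ha i), ?_⟩
  rw [Finset.smul_sum]
  refine Finset.sum_congr rfl fun i _ => ?_
  rw [gstar_smul, smul_mul_smul_comm, Complex.conj_ofReal, ← Complex.ofReal_mul,
    Real.mul_self_sqrt hr]


/-- `Δ_g := (g-1)*(g-1)`. -/
def Dl (g : Γ) : MonoidAlgebra ℂ Γ := gstar Γ (cE Γ g) * cE Γ g

lemma of_inv_mul_of (g : Γ) :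
    MonoidAlgebra.of ℂ Γ g⁻¹ * MonoidAlgebra.of ℂ Γ g = 1 := by
  rw [← map_mul, inv_mul_cancel, map_one]

lemma Dl_eq (g : Γ) :
    Dl g = (1 : MonoidAlgebra ℂ Γ) + 1 - MonoidAlgebra.of ℂ Γ g - MonoidAlgebra.of ℂ Γ g⁻¹ := by
  unfold Dl cE
  rw [gstar_sub, gstar_one, gstar_of, sub_mul, mul_sub, mul_sub, of_inv_mul_of,
    mul_one, one_mul]
  simp only [mul_one, one_mul]
  abel

lemma Dl_inv (g : Γ) : Dl g⁻¹ = Dl g := by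
  rw [Dl_eq, Dl_eq, inv_inv]
  abel

lemma Dl_one : Dl (1 : Γ) = 0 := by
  have : cE Γ (1 : Γ) = 0 := by simp [cE, MonoidAlgebra.one_def]
  rw [Dl, this, gstar_zero, zero_mul]

lemma parallelogram (x y : MonoidAlgebra ℂ Γ) :
    gstar Γ (x + y) * (x + y) + gstar Γ (x - y) * (x - y)
      = gstar Γ x * x + gstar Γ x * x + (gstar Γ y * y + gstar Γ y * y) := by
  rw [gstar_add, gstar_sub]
  noncomm_ring

lemma sum_of_inv {S : Finset Γ} (hsym : ∀ s ∈ S, s⁻¹ ∈ S) :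
    ∑ t ∈ S, MonoidAlgebra.of ℂ Γ t⁻¹ = ∑ t ∈ S, MonoidAlgebra.of ℂ Γ t := by
  refine Finset.sum_nbij' (fun t => t⁻¹) (fun t => t⁻¹) ?_ ?_ ?_ ?_ ?_ <;>
    simp_all

lemma deltaTwo {S : Finset Γ} (hsym : ∀ s ∈ S, s⁻¹ ∈ S) :
    (2 : ℂ) • Delta Γ S = ∑ t ∈ S, Dl t := by
  rw [Finset.sum_congr rfl fun t _ => Dl_eq t]
  rw [Delta]
  simp only [Finset.sum_sub_distrib, Finset.sum_add_distrib, Finset.sum_const, sum_of_inv hsym,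
    smul_sub, nsmul_eq_mul]
  rw [two_smul, two_smul]
  push_cast
  simp only [mul_one]
  abel

lemma Delta_mem {S : Finset Γ} (hsym : ∀ s ∈ S, s⁻¹ ∈ S) : Delta Γ S ∈ SOSomega Γ := by
  have h2 : (2 : ℂ) • Delta Γ S ∈ SOSomega Γ := by
    rw [deltaTwo hsym]
    exact SOSomega_sum _ _ fun t _ => SOSomega_sq (omega_cE t)
  have := SOSomega_smul (r := 1/2) (by norm_num) h2
  rw [smul_smul] at this
  norm_num at this
  exact this

/-- If `x*x ≤ Cx·Δ` and `y*y ≤ Cy·Δ` and `x - y ∈ ω`, then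
`(x+y)*(x+y) ≤ (2Cx+2Cy)·Δ`. -/
lemma combine {S : Finset Γ} {x y : MonoidAlgebra ℂ Γ} (hxy : x - y ∈ omega Γ)
    {Cx Cy : ℝ}
    (hx : (Cx : ℂ) • Delta Γ S - gstar Γ x * x ∈ SOSomega Γ)
    (hy : (Cy : ℂ) • Delta Γ S - gstar Γ y * y ∈ SOSomega Γ) :
    ((2 * Cx + 2 * Cy : ℝ) : ℂ) • Delta Γ S - gstar Γ (x + y) * (x + y) ∈ SOSomega Γ := by
  have par : gstar Γ (x + y) * (x + y)
      = gstar Γ x * x + gstar Γ x * x + (gstar Γ y * y + gstar Γ y * y)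
        - gstar Γ (x - y) * (x - y) :=
    eq_sub_of_add_eq (parallelogram x y)
  have key : ((2 * Cx + 2 * Cy : ℝ) : ℂ) • Delta Γ S - gstar Γ (x + y) * (x + y)
      = ((2 : ℝ) : ℂ) • ((Cx : ℂ) • Delta Γ S - gstar Γ x * x)
        + ((2 : ℝ) : ℂ) • ((Cy : ℂ) • Delta Γ S - gstar Γ y * y)
        + gstar Γ (x - y) * (x - y) := by
    rw [par]
    push_cast
    module
  rw [key]
  exact SOSomega_add (SOSomega_add (SOSomega_smul (by norm_num) hx)
    (SOSomega_smul (by norm_num) hy)) (SOSomega_sq hxy)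

lemma Dl_bound {S : Finset Γ} (hsym : ∀ s ∈ S, s⁻¹ ∈ S)
    (hgen : Subgroup.closure (S : Set Γ) = ⊤) (g : Γ) :
    ∃ C : ℝ, 0 ≤ C ∧ (C : ℂ) • Delta Γ S - Dl g ∈ SOSomega Γ := by
  classical
  have hg : g ∈ Subgroup.closure (S : Set Γ) := by rw [hgen]; trivial
  induction hg using Subgroup.closure_induction with
  | mem s hs =>
    refine ⟨2, by norm_num, ?_⟩
    have hs' : s ∈ S := hs
    have h2 : ((2 : ℝ) : ℂ) • Delta Γ S = Dl s + ∑ t ∈ S.erase s, Dl t := by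
      have h22 : ((2 : ℝ) : ℂ) = (2 : ℂ) := by norm_num
      rw [h22, deltaTwo hsym, Finset.add_sum_erase _ _ hs']
    rw [h2, add_sub_cancel_left]
    exact SOSomega_sum _ _ fun t _ => SOSomega_sq (omega_cE t)
  | one => exact ⟨0, le_refl 0, by rw [Dl_one]; simpa using SOSomega_zero⟩
  | inv x hx ih =>
    obtain ⟨C, hC, h⟩ := ih
    exact ⟨C, hC, by rwa [Dl_inv]⟩
  | mul x y hx hy ihx ihy =>
    obtain ⟨Cx, hCx, hbx⟩ := ihx
    obtain ⟨Cy, hCy, hby⟩ := ihy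
    refine ⟨2 * Cy + 2 * Cx, by positivity, ?_⟩
    have hx' : gstar Γ (MonoidAlgebra.of ℂ Γ x * cE Γ y) * (MonoidAlgebra.of ℂ Γ x * cE Γ y)
        = Dl y := by
      rw [gstar_mul, gstar_of, Dl, mul_assoc, ← mul_assoc (MonoidAlgebra.of ℂ Γ x⁻¹),
        of_inv_mul_of, one_mul]
    have hsum : MonoidAlgebra.of ℂ Γ x * cE Γ y + cE Γ x = cE Γ (x * y) := by
      unfold cE
      rw [mul_sub, mul_one, ← map_mul]
      abel
    have hDl : Dl (x * y) = gstar Γ (MonoidAlgebra.of ℂ Γ x * cE Γ y + cE Γ x)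
        * (MonoidAlgebra.of ℂ Γ x * cE Γ y + cE Γ x) := by rw [hsum, Dl]
    rw [hDl]
    refine combine ?_ (by rwa [hx']) hbx
    exact omega_sub (omega_mul_left _ (omega_cE y)) (omega_cE x)

lemma aug_eq_sum (a : MonoidAlgebra ℂ Γ) : aug Γ a = ∑ g ∈ a.coeff.support, a.coeff g := by
  conv_lhs => rw [← MonoidAlgebra.sum_coeff_single a, Finsupp.sum, map_sum]
  exact Finset.sum_congr rfl fun g _ => aug_single g (a.coeff g)

lemma omega_repr {a : MonoidAlgebra ℂ Γ} (ha : a ∈ omega Γ) :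
    a = ∑ g ∈ a.coeff.support, a.coeff g • cE Γ g := by
  have h1 : ∑ g ∈ a.coeff.support, a.coeff g • MonoidAlgebra.of ℂ Γ g = a := by
    conv_rhs => rw [← MonoidAlgebra.sum_coeff_single a, Finsupp.sum]
    refine Finset.sum_congr rfl fun g _ => ?_
    rw [MonoidAlgebra.of_apply, MonoidAlgebra.smul_single', mul_one]
  have h2 : ∑ g ∈ a.coeff.support, a.coeff g = 0 := by
    rw [← aug_eq_sum]; exact mem_omega.1 ha
  calc a = ∑ g ∈ a.coeff.support, a.coeff g • MonoidAlgebra.of ℂ Γ g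
        - (∑ g ∈ a.coeff.support, a.coeff g) • (1 : MonoidAlgebra ℂ Γ) := by
          rw [h1, h2, zero_smul, sub_zero]
    _ = ∑ g ∈ a.coeff.support, a.coeff g • cE Γ g := by
          rw [Finset.sum_smul]
          rw [← Finset.sum_sub_distrib]
          exact Finset.sum_congr rfl fun g _ => by rw [cE, smul_sub]

lemma sq_bound {S : Finset Γ} (hsym : ∀ s ∈ S, s⁻¹ ∈ S)
    (hgen : Subgroup.closure (S : Set Γ) = ⊤) {a : MonoidAlgebra ℂ Γ} (ha : a ∈ omega Γ) :
    ∃ C : ℝ, 0 ≤ C ∧ (C : ℂ) • Delta Γ S - gstar Γ a * a ∈ SOSomega Γ := by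
  classical
  suffices h : ∀ (t : Finset Γ) (f : Γ → ℂ), ∃ C : ℝ, 0 ≤ C ∧
      (C : ℂ) • Delta Γ S - gstar Γ (∑ g ∈ t, f g • cE Γ g) * (∑ g ∈ t, f g • cE Γ g)
        ∈ SOSomega Γ by
    obtain ⟨C, hC, hmem⟩ := h a.coeff.support a.coeff
    rw [← omega_repr ha] at hmem
    exact ⟨C, hC, hmem⟩
  intro t f
  induction t using Finset.induction_on with
  | empty => exact ⟨0, le_refl 0, by simpa [gstar_zero] using SOSomega_zero⟩
  | @insert g t hg ih =>
    obtain ⟨C, hC, hmem⟩ := ih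
    obtain ⟨Cg, hCg, hbg⟩ := Dl_bound hsym hgen g
    rw [Finset.sum_insert hg]
    set r := Complex.normSq (f g) with hr
    have hsingle : ((r * Cg : ℝ) : ℂ) • Delta Γ S
        - gstar Γ (f g • cE Γ g) * (f g • cE Γ g) ∈ SOSomega Γ := by
      have heq : ((r * Cg : ℝ) : ℂ) • Delta Γ S
          - gstar Γ (f g • cE Γ g) * (f g • cE Γ g)
          = (r : ℂ) • ((Cg : ℂ) • Delta Γ S - Dl g) := by
        rw [gstar_smul, smul_mul_smul_comm]
        have : (starRingEnd ℂ) (f g) * f g = (r : ℂ) := by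
          rw [hr, mul_comm, Complex.mul_conj]
        rw [this]
        unfold Dl
        push_cast
        module
      rw [heq]
      exact SOSomega_smul (Complex.normSq_nonneg _) hbg
    have hrn : (0:ℝ) ≤ r := Complex.normSq_nonneg (f g)
    refine ⟨2 * (r * Cg) + 2 * C, by positivity, ?_⟩
    refine combine ?_ hsingle hmem
    refine omega_sub (omega_smul _ (omega_cE g)) ?_
    exact Finset.sum_induction _ _ (fun _ _ => omega_add) omega_zero
      fun i _ => omega_smul _ (omega_cE i)

lemma main_bound {S : Finset Γ} (hsym : ∀ s ∈ S, s⁻¹ ∈ S)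
    (hgen : Subgroup.closure (S : Set Γ) = ⊤) {b : MonoidAlgebra ℂ Γ} (hb : b ∈ omegaSq Γ) :
    ∃ C : ℝ, 0 ≤ C ∧ ∀ l : ℂ, ‖l‖ ≤ 1 →
      (C : ℂ) • Delta Γ S + (l • b + (starRingEnd ℂ l) • gstar Γ b) ∈ SOSomega Γ := by
  have hb' : b ∈ Submodule.span ℂ {x : MonoidAlgebra ℂ Γ |
      ∃ a ∈ omega Γ, ∃ c ∈ omega Γ, x = a * c} := hb
  clear hb
  induction hb' using Submodule.span_induction with
  | zero => exact ⟨0, le_refl 0, fun l _ => by simpa [gstar_zero] using SOSomega_zero⟩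
  | mem x hx =>
    obtain ⟨a, ha, c, hc, rfl⟩ := hx
    set u := gstar Γ a with hu'
    have hu : gstar Γ u = a := gstar_gstar a
    obtain ⟨Cu, hCu, hbu⟩ := sq_bound hsym hgen (omega_gstar ha)
    obtain ⟨Cc, hCc, hbc⟩ := sq_bound hsym hgen hc
    rw [hu] at hbu
    refine ⟨Cu + Cc, by positivity, fun l hl => ?_⟩
    set x' := (starRingEnd ℂ l) • u + c with hx'def
    have hx'mem : x' ∈ omega Γ := omega_add (omega_smul _ (omega_gstar ha)) hc
    have hnl : starRingEnd ℂ l * l = ((Complex.normSq l : ℝ) : ℂ) := by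
      rw [mul_comm, Complex.mul_conj]
    have hst : gstar Γ x' = l • a + gstar Γ c := by
      rw [hx'def, gstar_add, gstar_smul, hu, Complex.conj_conj]
    have hexp : gstar Γ x' * x' = ((Complex.normSq l : ℝ) : ℂ) • (a * u)
        + l • (a * c) + (starRingEnd ℂ l) • (gstar Γ c * u) + gstar Γ c * c := by
      rw [hst, hx'def, ← hnl]
      simp only [mul_add, add_mul, smul_mul_smul_comm, smul_mul_assoc, mul_smul_comm]
      module
    have hsq : Complex.normSq l ≤ 1 := by
      have := Complex.sq_norm l
      nlinarith [norm_nonneg l]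
    have key : ((Cu + Cc : ℝ) : ℂ) • Delta Γ S
        + (l • (a * c) + (starRingEnd ℂ l) • gstar Γ (a * c))
        = gstar Γ x' * x' + ((Cc : ℂ) • Delta Γ S - gstar Γ c * c)
          + ((Complex.normSq l : ℝ) : ℂ) • ((Cu : ℂ) • Delta Γ S - a * u)
          + (((1 - Complex.normSq l) * Cu : ℝ) : ℂ) • Delta Γ S := by
      rw [gstar_mul, ← hu', hexp]
      push_cast
      module
    rw [key]
    refine SOSomega_add (SOSomega_add (SOSomega_add (SOSomega_sq hx'mem) hbc) ?_) ?_
    · exact SOSomega_smul (Complex.normSq_nonneg l) hbu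
    · refine SOSomega_smul ?_ (Delta_mem hsym)
      nlinarith
  | add x y hx hy ihx ihy =>
    obtain ⟨Cx, hCx, ihx⟩ := ihx
    obtain ⟨Cy, hCy, ihy⟩ := ihy
    refine ⟨Cx + Cy, by positivity, fun l hl => ?_⟩
    have key : ((Cx + Cy : ℝ) : ℂ) • Delta Γ S
        + (l • (x + y) + (starRingEnd ℂ l) • gstar Γ (x + y))
        = ((Cx : ℂ) • Delta Γ S + (l • x + (starRingEnd ℂ l) • gstar Γ x))
          + ((Cy : ℂ) • Delta Γ S + (l • y + (starRingEnd ℂ l) • gstar Γ y)) := by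
      rw [gstar_add]
      push_cast
      module
    rw [key]
    exact SOSomega_add (ihx l hl) (ihy l hl)
  | smul μ x hx ih =>
    obtain ⟨Cx, hCx, ih⟩ := ih
    set m := ‖μ‖ with hm'
    have hm0 : (0 : ℝ) ≤ m := norm_nonneg μ
    refine ⟨(m + 1) * Cx, by positivity, fun l hl => ?_⟩
    set l' := (l * μ) / ((m + 1 : ℝ) : ℂ) with hl'def
    have hmpos : (0 : ℝ) < m + 1 := by linarith
    have hne : ((m + 1 : ℝ) : ℂ) ≠ 0 := Complex.ofReal_ne_zero.mpr hmpos.ne'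
    have hl' : ‖l'‖ ≤ 1 := by
      rw [hl'def, norm_div, norm_mul, Complex.norm_real, Real.norm_eq_abs, abs_of_pos hmpos]
      rw [div_le_one hmpos]
      nlinarith [norm_nonneg l]
    have h1 : ((m + 1 : ℝ) : ℂ) * l' = l * μ := by
      rw [hl'def, mul_comm, div_mul_cancel₀ _ hne]
    have h2 : ((m + 1 : ℝ) : ℂ) * starRingEnd ℂ l' = starRingEnd ℂ l * starRingEnd ℂ μ := by
      rw [hl'def, map_div₀, Complex.conj_ofReal, map_mul, mul_comm, div_mul_cancel₀ _ hne]
    have key : (((m + 1) * Cx : ℝ) : ℂ) • Delta Γ S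
        + (l • (μ • x) + (starRingEnd ℂ l) • gstar Γ (μ • x))
        = ((m + 1 : ℝ) : ℂ) • ((Cx : ℂ) • Delta Γ S
            + (l' • x + (starRingEnd ℂ l') • gstar Γ x)) := by
      rw [gstar_smul]
      rw [smul_add, smul_add, smul_smul, smul_smul, smul_smul, smul_smul, smul_smul,
        h1, h2]
      push_cast
      module
    rw [key]
    exact SOSomega_smul (by positivity) (ih l' hl')

lemma herm_bound {S : Finset Γ} (hsym : ∀ s ∈ S, s⁻¹ ∈ S)
    (hgen : Subgroup.closure (S : Set Γ) = ⊤) {b : MonoidAlgebra ℂ Γ} (hb : b ∈ omegaSq Γ)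
    (hherm : gstar Γ b = b) :
    ∃ C : ℝ, 0 ≤ C ∧ (C : ℂ) • Delta Γ S + b ∈ SOSomega Γ
      ∧ (C : ℂ) • Delta Γ S - b ∈ SOSomega Γ := by
  obtain ⟨C, hC, h⟩ := main_bound hsym hgen hb
  refine ⟨C, hC, ?_, ?_⟩
  · have h1 := h ((1/2 : ℝ) : ℂ) (by rw [Complex.norm_real, Real.norm_eq_abs]; rw [abs_le]; constructor <;> norm_num)
    rw [Complex.conj_ofReal, hherm] at h1
    have heq : ((1/2 : ℝ) : ℂ) • b + ((1/2 : ℝ) : ℂ) • b = b := by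
      push_cast; module
    rwa [heq] at h1
  · have h1 := h ((-(1/2) : ℝ) : ℂ) (by rw [Complex.norm_real, Real.norm_eq_abs]; rw [abs_le]; constructor <;> norm_num)
    rw [Complex.conj_ofReal, hherm] at h1
    have heq : (C : ℂ) • Delta Γ S + (((-(1/2) : ℝ) : ℂ) • b + ((-(1/2) : ℝ) : ℂ) • b)
        = (C : ℂ) • Delta Γ S - b := by
      push_cast; module
    rwa [heq] at h1

lemma interior_dir {S : Finset Γ} (hsym : ∀ s ∈ S, s⁻¹ ∈ S)
    (hgen : Subgroup.closure (S : Set Γ) = ⊤) {w : MonoidAlgebra ℂ Γ} (hw : w ∈ omegaSq Γ)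
    (hherm : gstar Γ w = w) :
    ∃ ε : ℝ, 0 < ε ∧ Delta Γ S + (ε : ℂ) • w ∈ SOSomega Γ := by
  obtain ⟨C, hC, hplus, _⟩ := LapAux.herm_bound hsym hgen hw hherm
  set ε := (C + 1)⁻¹ with hεdef
  have hεpos : (0 : ℝ) < ε := by positivity
  have hεC : ε * C + ε = 1 := by
    have h0 : ε * (C + 1) = 1 := inv_mul_cancel₀ (by positivity)
    linear_combination h0
  have h1mc : (0 : ℝ) ≤ 1 - ε * C := by linarith
  refine ⟨ε, hεpos, ?_⟩
  have key : Delta Γ S + (ε : ℂ) • w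
      = (ε : ℂ) • ((C : ℂ) • Delta Γ S + w) + ((1 - ε * C : ℝ) : ℂ) • Delta Γ S := by
    push_cast; module
  rw [key]
  exact SOSomega_add (SOSomega_smul hεpos.le hplus) (SOSomega_smul h1mc (Delta_mem hsym))

end LapAux

/-- **The Laplacian is an interior point of `Σ²ω(Γ)`.**  Let `Γ` be generated by the finite
symmetric set `S`.  For every hermitian `b ∈ ω²(Γ)` there is a constant `C(b) ∈ ℝ` with
`C(b)·Δ(S) ± b ∈ Σ²ω(Γ)`.  In particular `Δ(S)` is an algebraic interior point of
`Σ²ω(Γ)` in `ω²(Γ)^h`, and if `ω²(Γ) = ω(Γ)` (i.e. `H₁(Γ,ℂ) = 0`) it is an algebraic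
interior point in `ω(Γ)^h`. -/
theorem laplacian_interior_point_SOSomega (S : Finset Γ)
    (hsym : ∀ s ∈ S, s⁻¹ ∈ S) (hgen : Subgroup.closure (S : Set Γ) = ⊤) :
    (∀ b ∈ omegaSq Γ, gstar Γ b = b →
      ∃ Cb : ℝ, (Cb : ℂ) • Delta Γ S + b ∈ SOSomega Γ ∧
        (Cb : ℂ) • Delta Γ S - b ∈ SOSomega Γ) ∧
    (∀ w ∈ omegaSq Γ, gstar Γ w = w →
      ∃ ε : ℝ, 0 < ε ∧ Delta Γ S + (ε : ℂ) • w ∈ SOSomega Γ) ∧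
    ((∀ a ∈ omega Γ, a ∈ omegaSq Γ) →
      ∀ w ∈ omega Γ, gstar Γ w = w →
        ∃ ε : ℝ, 0 < ε ∧ Delta Γ S + (ε : ℂ) • w ∈ SOSomega Γ) := by
  refine ⟨fun b hb hherm => ?_, fun w hw hherm => LapAux.interior_dir hsym hgen hw hherm,
    fun hyp w hw hherm => LapAux.interior_dir hsym hgen (hyp w hw) hherm⟩
  obtain ⟨C, _, h1, h2⟩ := LapAux.herm_bound hsym hgen hb hherm
  exact ⟨C, h1, h2⟩
end
end
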